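/- arXiv:2205.15369 — 5 statements merged into one kernel-verified Lean document; each statement's English description precedes it below -/
import Mathlib

section
/- Let G be a finite nilpotent group of nilpotency class at most 2, let e = exp(G), e' = exp([G,G]) and f = exp(G/Z(G)). Then for every word w in the free group F_2 on two generators x, y there exist positive integers m and n with m dividing e, n dividing f and n ≤ e' such that w(G) equals the image of the word x^m[x,y^n] on G, where [x,y^n] = x y^n x^{-1} y^{-n}. -/
/-- The image of the word map on `G` induced by a word `w` in the free group
on `d` generators. -/
def wordImage {d : ℕ} (G : Type*) [Group G] (w : FreeGroup (Fin d)) : Set G :=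
  Set.range fun f : Fin d → G => FreeGroup.lift f w

/-- `A` is a word image impostor in `G`: it contains `1`, is invariant under all
automorphisms of `G`, and is not the image of any word map. -/
def IsWordImageImpostor (G : Type*) [Group G] (A : Set G) : Prop :=
  (1 : G) ∈ A ∧ (∀ (φ : G ≃* G), ∀ g ∈ A, φ g ∈ A) ∧
    ¬ ∃ (d : ℕ) (_ : 1 ≤ d) (w : FreeGroup (Fin d)), A = wordImage G w

/-- `G` is an extraspecial `p`-group: a `p`-group whose center, commutator subgroup
and Frattini subgroup coincide and have order `p`. -/
def IsExtraspecial (p : ℕ) (G : Type*) [Group G] : Prop :=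
  IsPGroup p G ∧ Subgroup.center G = commutator G ∧
    Subgroup.center G = frattini G ∧ Nat.card (Subgroup.center G) = p

open scoped commutatorElement

section ClassTwo

variable {G : Type*} [Group G] (hz : ∀ g h : G, ⁅g, h⁆ ∈ Subgroup.center G)

include hz

theorem cc_comm (g h k : G) : ⁅g, h⁆ * k = k * ⁅g, h⁆ :=
  ((Subgroup.mem_center_iff.mp (hz g h)) k).symm

theorem cc_swap (x y : G) : x * y = y * x * ⁅x, y⁆ := by
  rw [← cc_comm hz x y (y * x)]
  rw [commutatorElement_def]
  group

theorem cc_mul_right (g h₁ h₂ : G) : ⁅g, h₁ * h₂⁆ = ⁅g, h₁⁆ * ⁅g, h₂⁆ := by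
  have h := cc_comm hz g h₂ h₁
  simp only [commutatorElement_def] at *
  calc g * (h₁ * h₂) * g⁻¹ * (h₁ * h₂)⁻¹
      = (g * h₁ * g⁻¹ * h₁⁻¹) * (h₁ * (g * h₂ * g⁻¹ * h₂⁻¹) * h₁⁻¹) := by group
    _ = (g * h₁ * g⁻¹ * h₁⁻¹) * ((g * h₂ * g⁻¹ * h₂⁻¹) * h₁ * h₁⁻¹) := by rw [h]
    _ = g * h₁ * g⁻¹ * h₁⁻¹ * (g * h₂ * g⁻¹ * h₂⁻¹) := by group

theorem cc_mul_left (g₁ g₂ h : G) : ⁅g₁ * g₂, h⁆ = ⁅g₁, h⁆ * ⁅g₂, h⁆ := by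
  have h1 := cc_comm hz g₂ h g₁
  have h2 := cc_comm hz g₁ h (⁅g₂, h⁆)
  simp only [commutatorElement_def] at *
  calc g₁ * g₂ * h * (g₁ * g₂)⁻¹ * h⁻¹
      = g₁ * (g₂ * h * g₂⁻¹ * h⁻¹) * g₁⁻¹ * (g₁ * h * g₁⁻¹ * h⁻¹) := by group
    _ = g₂ * h * g₂⁻¹ * h⁻¹ * g₁ * g₁⁻¹ * (g₁ * h * g₁⁻¹ * h⁻¹) := by rw [← h1]
    _ = (g₁ * h * g₁⁻¹ * h⁻¹) * (g₂ * h * g₂⁻¹ * h⁻¹) := by rw [h2]; group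

/-- right-commutator as a hom -/
def commR (g : G) : G →* G where
  toFun h := ⁅g, h⁆
  map_one' := commutatorElement_one_right g
  map_mul' := cc_mul_right hz g

def commL (h : G) : G →* G where
  toFun g := ⁅g, h⁆
  map_one' := commutatorElement_one_left h
  map_mul' := fun g₁ g₂ => cc_mul_left hz g₁ g₂ h

theorem cc_zpow_right (g h : G) (n : ℤ) : ⁅g, h ^ n⁆ = ⁅g, h⁆ ^ n :=
  (commR hz g).map_zpow h n

theorem cc_zpow_left (g h : G) (n : ℤ) : ⁅g ^ n, h⁆ = ⁅g, h⁆ ^ n :=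
  (commL hz h).map_zpow g n

theorem cc_zpow_comm (g h k : G) (n : ℤ) : ⁅g, h⁆ ^ n * k = k * ⁅g, h⁆ ^ n := by
  rw [← cc_zpow_left hz g h n]
  exact cc_comm hz _ _ _

omit hz in
theorem cc_inv (g h : G) : ⁅g, h⁆⁻¹ = ⁅g, h⁆ ^ (-1 : ℤ) := by group

theorem cc_swap_zpow (x y : G) (a b : ℤ) :
    x ^ a * y ^ b = y ^ b * x ^ a * ⁅x, y⁆ ^ (a * b) := by
  rw [cc_swap hz (x ^ a) (y ^ b), cc_zpow_left hz, cc_zpow_right hz, ← zpow_mul,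
    mul_comm b a]

theorem cc_swap_zpow' (x y : G) (a b : ℤ) :
    y ^ b * x ^ a = x ^ a * y ^ b * ⁅x, y⁆ ^ (-(b * a)) := by
  rw [cc_swap_zpow hz y x b a, ← commutatorElement_inv x y, inv_zpow, zpow_neg]

end ClassTwo

section ClassTwo2

variable {G : Type*} [Group G] (hz : ∀ g h : G, ⁅g, h⁆ ∈ Subgroup.center G)

include hz

theorem Pg (g h : G) (a b c t : ℤ) :
    (g ^ a * h ^ b * ⁅g, h⁆ ^ c) * g ^ t = g ^ (a + t) * h ^ b * ⁅g, h⁆ ^ (c - b * t) := by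
  have h1 : h ^ b * g ^ t = g ^ t * h ^ b * ⁅g, h⁆ ^ (-(b * t)) := cc_swap_zpow' hz g h t b
  have h2 : ⁅g, h⁆ ^ c * g ^ t = g ^ t * ⁅g, h⁆ ^ c := cc_zpow_comm hz g h (g ^ t) c
  calc (g ^ a * h ^ b * ⁅g, h⁆ ^ c) * g ^ t
      = g ^ a * (h ^ b * (⁅g, h⁆ ^ c * g ^ t)) := by group
    _ = g ^ a * (h ^ b * g ^ t) * ⁅g, h⁆ ^ c := by rw [h2]; group
    _ = g ^ a * (g ^ t * h ^ b * ⁅g, h⁆ ^ (-(b * t))) * ⁅g, h⁆ ^ c := by rw [h1]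
    _ = g ^ (a + t) * h ^ b * ⁅g, h⁆ ^ (c - b * t) := by group

theorem Ph (g h : G) (a b c t : ℤ) :
    (g ^ a * h ^ b * ⁅g, h⁆ ^ c) * h ^ t = g ^ a * h ^ (b + t) * ⁅g, h⁆ ^ c := by
  have h2 : ⁅g, h⁆ ^ c * h ^ t = h ^ t * ⁅g, h⁆ ^ c := cc_zpow_comm hz g h (h ^ t) c
  calc (g ^ a * h ^ b * ⁅g, h⁆ ^ c) * h ^ t
      = g ^ a * (h ^ b * (⁅g, h⁆ ^ c * h ^ t)) := by group
    _ = g ^ a * (h ^ b * (h ^ t * ⁅g, h⁆ ^ c)) := by rw [h2]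
    _ = g ^ a * h ^ (b + t) * ⁅g, h⁆ ^ c := by group

omit hz in
theorem Pz (g h : G) (a b c t : ℤ) :
    (g ^ a * h ^ b * ⁅g, h⁆ ^ c) * ⁅g, h⁆ ^ t = g ^ a * h ^ b * ⁅g, h⁆ ^ (c + t) := by
  group

theorem Pmul (g h : G) (a₁ b₁ c₁ a₂ b₂ c₂ : ℤ) :
    (g ^ a₁ * h ^ b₁ * ⁅g, h⁆ ^ c₁) * (g ^ a₂ * h ^ b₂ * ⁅g, h⁆ ^ c₂) =
      g ^ (a₁ + a₂) * h ^ (b₁ + b₂) * ⁅g, h⁆ ^ (c₁ - b₁ * a₂ + c₂) := by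
  calc (g ^ a₁ * h ^ b₁ * ⁅g, h⁆ ^ c₁) * (g ^ a₂ * h ^ b₂ * ⁅g, h⁆ ^ c₂)
      = (((g ^ a₁ * h ^ b₁ * ⁅g, h⁆ ^ c₁) * g ^ a₂) * h ^ b₂) * ⁅g, h⁆ ^ c₂ := by group
    _ = ((g ^ (a₁ + a₂) * h ^ b₁ * ⁅g, h⁆ ^ (c₁ - b₁ * a₂)) * h ^ b₂) * ⁅g, h⁆ ^ c₂ := by
        rw [Pg hz]
    _ = (g ^ (a₁ + a₂) * h ^ (b₁ + b₂) * ⁅g, h⁆ ^ (c₁ - b₁ * a₂)) * ⁅g, h⁆ ^ c₂ := by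
        rw [Ph hz]
    _ = g ^ (a₁ + a₂) * h ^ (b₁ + b₂) * ⁅g, h⁆ ^ (c₁ - b₁ * a₂ + c₂) := Pz g h _ _ _ _

theorem normal_form (w : FreeGroup (Fin 2)) :
    ∃ a b c : ℤ, ∀ f : Fin 2 → G,
      FreeGroup.lift f w = (f 0) ^ a * (f 1) ^ b * ⁅f 0, f 1⁆ ^ c := by
  induction w using FreeGroup.induction_on with
  | C1 => exact ⟨0, 0, 0, fun f => by simp⟩
  | of x =>
    refine ⟨if x = 0 then 1 else 0, if x = 0 then 0 else 1, 0, fun f => ?_⟩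
    have hx : FreeGroup.lift f (FreeGroup.of x) = f x := FreeGroup.lift_apply_of
    rw [hx]
    fin_cases x <;> simp
  | inv_of x _ =>
    refine ⟨if x = 0 then -1 else 0, if x = 0 then 0 else -1, 0, fun f => ?_⟩
    have hx : FreeGroup.lift f (FreeGroup.of x) = f x := FreeGroup.lift_apply_of
    rw [map_inv, hx]
    fin_cases x <;> simp
  | mul x y ihx ihy =>
    obtain ⟨a₁, b₁, c₁, h₁⟩ := ihx
    obtain ⟨a₂, b₂, c₂, h₂⟩ := ihy
    exact ⟨a₁ + a₂, b₁ + b₂, c₁ - b₁ * a₂ + c₂, fun f => by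
      rw [map_mul, h₁ f, h₂ f, Pmul hz]⟩

end ClassTwo2

/-- the image of the map (g,h) ↦ g^a h^b ⁅g,h⁆^c -/
def Sset (G : Type*) [Group G] (a b c : ℤ) : Set G :=
  Set.range (fun p : G × G => p.1 ^ a * p.2 ^ b * ⁅p.1, p.2⁆ ^ c)

section ClassTwo3

variable {G : Type*} [Group G] (hz : ∀ g h : G, ⁅g, h⁆ ∈ Subgroup.center G)

include hz

theorem cc_mul_zpow (b : ℤ) : ∃ k : ℤ, ∀ g h : G,
    (g * h) ^ b = g ^ b * h ^ b * ⁅g, h⁆ ^ k := by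
  induction b using Int.induction_on with
  | zero => exact ⟨0, fun g h => by simp⟩
  | succ n ih =>
    obtain ⟨k, hk⟩ := ih
    refine ⟨k - (n : ℤ) * 1 + 0, fun g h => ?_⟩
    calc (g * h) ^ ((n : ℤ) + 1) = (g * h) ^ (n : ℤ) * (g * h) ^ (1 : ℤ) := by
          rw [← zpow_add]
      _ = (g ^ (n : ℤ) * h ^ (n : ℤ) * ⁅g, h⁆ ^ k) * (g ^ (1:ℤ) * h ^ (1:ℤ) * ⁅g, h⁆ ^ (0:ℤ)) := by
          rw [hk]; group
      _ = g ^ ((n : ℤ) + 1) * h ^ ((n : ℤ) + 1) * ⁅g, h⁆ ^ (k - (n : ℤ) * 1 + 0) :=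
          Pmul hz g h _ _ _ _ _ _
  | pred n ih =>
    obtain ⟨k, hk⟩ := ih
    refine ⟨k - -(n : ℤ) * -1 + -1, fun g h => ?_⟩
    calc (g * h) ^ (-(n : ℤ) - 1) = (g * h) ^ (-(n : ℤ)) * (g * h) ^ (-1 : ℤ) := by
          rw [← zpow_add]; ring_nf
      _ = (g ^ (-(n:ℤ)) * h ^ (-(n:ℤ)) * ⁅g, h⁆ ^ k) * (h ^ (-1:ℤ) * g ^ (-1:ℤ)) := by
          rw [hk]; group
      _ = (g ^ (-(n:ℤ)) * h ^ (-(n:ℤ)) * ⁅g, h⁆ ^ k) *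
            (g ^ (-1:ℤ) * h ^ (-1:ℤ) * ⁅g, h⁆ ^ (-((-1:ℤ) * -1))) := by
          rw [cc_swap_zpow' hz g h (-1) (-1)]
      _ = g ^ (-(n : ℤ) - 1) * h ^ (-(n : ℤ) - 1) * ⁅g, h⁆ ^ (k - -(n:ℤ) * -1 + -((-1:ℤ) * -1)) := by
          rw [Pmul hz g h]; group
      _ = g ^ (-(n : ℤ) - 1) * h ^ (-(n : ℤ) - 1) * ⁅g, h⁆ ^ (k - -(n:ℤ) * -1 + -1) := by
          norm_num

theorem Sshift (a b c t : ℤ) : ∃ c' : ℤ, Sset G a b c = Sset G (a + t * b) b c' := by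
  obtain ⟨k, hk⟩ := cc_mul_zpow hz b
  refine ⟨c - t * k - b * (t * b), ?_⟩
  have key : ∀ g h : G,
      g ^ (a + t * b) * h ^ b * ⁅g, h⁆ ^ (c - t * k - b * (t * b)) =
        g ^ a * (h * g ^ t) ^ b * ⁅g, h * g ^ t⁆ ^ c := by
    intro g h
    have e1 : ⁅g, h * g ^ t⁆ = ⁅g, h⁆ := by
      rw [cc_mul_right hz, cc_zpow_right hz g g t, commutatorElement_self, one_zpow, mul_one]
    have e2 : (h * g ^ t) ^ b = h ^ b * g ^ (t * b) * ⁅g, h⁆ ^ (-(t * k)) := by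
      rw [hk h (g ^ t), cc_zpow_right hz h g t, ← commutatorElement_inv g h]
      generalize ⁅g, h⁆ = z
      group
    rw [e1, e2, cc_swap_zpow' hz g h (t * b) b]
    group
  ext x
  constructor
  · rintro ⟨⟨g, h⟩, rfl⟩
    refine ⟨(g, h * g ^ (-t)), ?_⟩
    simp only
    rw [key g (h * g ^ (-t))]
    have : h * g ^ (-t) * g ^ t = h := by group
    rw [this]
  · rintro ⟨⟨g, h⟩, rfl⟩
    exact ⟨(g, h * g ^ t), (key g h).symm⟩

theorem Sswap (a b c : ℤ) : Sset G a b c = Sset G b a (-(a * b) - c) := by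
  have key : ∀ g h : G,
      g ^ a * h ^ b * ⁅g, h⁆ ^ c = h ^ b * g ^ a * ⁅h, g⁆ ^ (-(a * b) - c) := by
    intro g h
    rw [cc_swap_zpow hz g h a b, ← commutatorElement_inv g h, inv_zpow, ← zpow_neg]
    group
  ext x
  constructor
  · rintro ⟨⟨g, h⟩, rfl⟩
    exact ⟨(h, g), (key g h).symm⟩
  · rintro ⟨⟨g, h⟩, rfl⟩
    exact ⟨(h, g), key h g⟩

theorem Sreduce : ∀ (N : ℕ) (a b c : ℤ), b.natAbs ≤ N →
    ∃ A C : ℤ, Sset G a b c = Sset G A 0 C := by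
  intro N
  induction N with
  | zero =>
    intro a b c hb
    have : b = 0 := by omega
    subst this
    exact ⟨a, c, rfl⟩
  | succ N ih =>
    intro a b c hb
    by_cases h0 : b = 0
    · subst h0; exact ⟨a, c, rfl⟩
    · obtain ⟨c', hc'⟩ := Sshift hz a b c (-(a / b))
      have hr : a + -(a / b) * b = a % b := by rw [Int.emod_def]; ring
      rw [hr] at hc'
      have habs : (a % b).natAbs < b.natAbs := by
        have h1 : 0 ≤ a % b := Int.emod_nonneg a h0
        have h2 : a % b < (b.natAbs : ℤ) := by
          rw [← Int.abs_eq_natAbs]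
          rcases abs_cases b with ⟨he, _⟩ | ⟨he, hneg⟩
          · rw [he]; exact Int.emod_lt_of_pos a (by omega)
          · rw [he]
            have h3 : a % b = a % (-b) := by rw [Int.emod_neg]
            rw [h3]
            exact Int.emod_lt_of_pos a (by omega)
        omega
      obtain ⟨A, C, hAC⟩ := ih b (a % b) (-((a % b) * b) - c') (by omega)
      exact ⟨A, C, by rw [hc', Sswap hz, hAC]⟩

end ClassTwo3

theorem exists_gcd_unit (A : ℤ) (N : ℕ) (hN : 0 < N) :
    ∃ (m : ℕ) (U V : ℤ), 0 < m ∧ m ∣ N ∧ (N : ℤ) ∣ A - U * m ∧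
      (N : ℤ) ∣ (m : ℤ) - V * A ∧ (N : ℤ) ∣ U * V - 1 := by
  haveI : NeZero N := ⟨hN.ne'⟩
  obtain ⟨d, hd, u, hu, ha⟩ := ZMod.eq_unit_mul_divisor ((A : ZMod N))
  obtain ⟨uu, huu⟩ := hu
  refine ⟨d, ((uu : ZMod N).val : ℤ), (((uu⁻¹ : (ZMod N)ˣ) : ZMod N).val : ℤ), ?_, hd, ?_, ?_, ?_⟩
  · rcases Nat.eq_zero_or_pos d with h | h
    · subst h; exact absurd (Nat.eq_zero_of_zero_dvd hd) hN.ne'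
    · exact h
  · rw [← ZMod.intCast_zmod_eq_zero_iff_dvd]
    push_cast
    rw [ZMod.natCast_zmod_val, huu, ha]
    ring
  · rw [← ZMod.intCast_zmod_eq_zero_iff_dvd]
    push_cast
    rw [ZMod.natCast_zmod_val, ha, ← huu]
    have : ((uu⁻¹ : (ZMod N)ˣ) : ZMod N) * ((uu : (ZMod N)ˣ) : ZMod N) = 1 := by
      rw [← Units.val_mul, inv_mul_cancel, Units.val_one]
    calc (d : ZMod N) - (uu⁻¹ : (ZMod N)ˣ) * ((uu : (ZMod N)ˣ) * (d : ZMod N))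
        = (d : ZMod N) - ((uu⁻¹ : (ZMod N)ˣ) * (uu : (ZMod N)ˣ) : ZMod N) * d := by ring
      _ = 0 := by rw [this]; ring
  · rw [← ZMod.intCast_zmod_eq_zero_iff_dvd]
    push_cast
    rw [ZMod.natCast_zmod_val, ZMod.natCast_zmod_val]
    rw [← Units.val_mul, mul_inv_cancel, Units.val_one, sub_self]

theorem zpow_congr {G : Type*} [Group G] {g : G} {N : ℕ} (hg : g ^ N = 1) {x y : ℤ}
    (h : (N : ℤ) ∣ x - y) : g ^ x = g ^ y := by
  obtain ⟨k, hk⟩ := h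
  have hx : x = y + (N : ℤ) * k := by linarith
  rw [hx, zpow_add, zpow_mul, zpow_natCast, hg, one_zpow, mul_one]

section ClassTwo4

variable {G : Type*} [Group G] (hz : ∀ g h : G, ⁅g, h⁆ ∈ Subgroup.center G)

include hz

theorem S_eq (e f : ℕ) (he : ∀ g : G, g ^ e = 1) (hf : ∀ g h : G, ⁅g, h⁆ ^ f = 1)
    (A C : ℤ) (m n : ℕ) (U V U' V' : ℤ)
    (h1 : (e : ℤ) ∣ A - U * m) (h2 : (e : ℤ) ∣ (m : ℤ) - V * A) (h3 : (f : ℤ) ∣ U * V - 1)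
    (h4 : (f : ℤ) ∣ C - U' * n) (h5 : (f : ℤ) ∣ (n : ℤ) - V' * C) :
    Sset G A 0 C = Sset G (m : ℤ) 0 (n : ℤ) := by
  have form : ∀ (g h : G) (x y a c : ℤ),
      (g ^ x) ^ a * (h ^ y) ^ (0 : ℤ) * ⁅g ^ x, h ^ y⁆ ^ c =
        g ^ (x * a) * h ^ (0 : ℤ) * ⁅g, h⁆ ^ (x * y * c) := by
    intro g h x y a c
    rw [cc_zpow_left hz g (h ^ y) x, cc_zpow_right hz g h y]
    generalize ⁅g, h⁆ = z
    group
  ext x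
  constructor
  · rintro ⟨⟨g, h⟩, rfl⟩
    refine ⟨(g ^ U, h ^ (V * U')), ?_⟩
    simp only
    rw [form g h U (V * U') (m : ℤ) (n : ℤ)]
    have hg : g ^ (U * (m : ℤ)) = g ^ A :=
      zpow_congr (he g) (by
        have : U * (m : ℤ) - A = -(A - U * m) := by ring
        rw [this]; exact dvd_neg.mpr h1)
    have hzc : ⁅g, h⁆ ^ (U * (V * U') * (n : ℤ)) = ⁅g, h⁆ ^ C :=
      zpow_congr (hf g h) (by
        have : U * (V * U') * (n : ℤ) - C = (U * V - 1) * (U' * n) + (U' * n - C) := by ring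
        rw [this]
        exact dvd_add (h3.mul_right _) (by
          have : U' * (n : ℤ) - C = -(C - U' * n) := by ring
          rw [this]; exact dvd_neg.mpr h4))
    rw [hg, hzc]
  · rintro ⟨⟨g, h⟩, rfl⟩
    refine ⟨(g ^ V, h ^ (U * V')), ?_⟩
    simp only
    rw [form g h V (U * V') A C]
    have hg : g ^ (V * A) = g ^ (m : ℤ) :=
      zpow_congr (he g) (by
        have : V * A - (m : ℤ) = -((m : ℤ) - V * A) := by ring
        rw [this]; exact dvd_neg.mpr h2)
    have hzc : ⁅g, h⁆ ^ (V * (U * V') * C) = ⁅g, h⁆ ^ (n : ℤ) :=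
      zpow_congr (hf g h) (by
        have : V * (U * V') * C - (n : ℤ) = (U * V - 1) * (V' * C) + (V' * C - n) := by ring
        rw [this]
        exact dvd_add (h3.mul_right _) (by
          have : V' * C - (n : ℤ) = -((n : ℤ) - V' * C) := by ring
          rw [this]; exact dvd_neg.mpr h5))
    rw [hg, hzc]

end ClassTwo4

theorem nilpotent_class_two_word_image' (G : Type*) [Group G] [Finite G]
    (hG : commutator G ≤ Subgroup.center G) (w : FreeGroup (Fin 2)) :
    ∃ m n : ℕ, 0 < m ∧ 0 < n ∧ m ∣ Monoid.exponent G ∧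
      n ∣ Monoid.exponent (G ⧸ Subgroup.center G) ∧
      n ≤ Monoid.exponent (commutator G) ∧
      wordImage G w =
        wordImage G ((FreeGroup.of (0 : Fin 2)) ^ m *
          ⁅(FreeGroup.of (0 : Fin 2)), (FreeGroup.of (1 : Fin 2)) ^ n⁆) := by
  classical
  have hz : ∀ g h : G, ⁅g, h⁆ ∈ Subgroup.center G := fun g h => by
    apply hG
    rw [commutator_def]
    exact Subgroup.commutator_mem_commutator (Subgroup.mem_top g) (Subgroup.mem_top h)
  set e := Monoid.exponent G with he_def
  have he : ∀ g : G, g ^ e = 1 := fun g => Monoid.pow_exponent_eq_one g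
  have he_pos : 0 < e := Monoid.ExponentExists.of_finite.exponent_pos
  haveI : Finite (G ⧸ Subgroup.center G) := Quotient.finite _
  set f := Monoid.exponent (G ⧸ Subgroup.center G) with hf_def
  have hf_pos : 0 < f := Monoid.ExponentExists.of_finite.exponent_pos
  have hfz : ∀ h : G, h ^ f ∈ Subgroup.center G := fun h => by
    have h1 : ((h : G ⧸ Subgroup.center G)) ^ f = 1 := Monoid.pow_exponent_eq_one _
    rwa [← QuotientGroup.mk_pow, QuotientGroup.eq_one_iff] at h1
  have hf : ∀ g h : G, ⁅g, h⁆ ^ f = 1 := fun g h => by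
    have h1 : ⁅g, h ^ f⁆ = ⁅g, h⁆ ^ f := (commR hz g).map_pow h f
    rw [← h1, commutatorElement_eq_one_iff_mul_comm]
    exact Subgroup.mem_center_iff.mp (hfz h) g
  have hfe : f ∣ e := by
    apply Monoid.exponent_dvd_of_forall_pow_eq_one
    intro q
    induction q using QuotientGroup.induction_on with
    | _ g => rw [← QuotientGroup.mk_pow, he g]; rfl
  set e' := Monoid.exponent (commutator G) with he'_def
  have he'_pos : 0 < e' := Monoid.ExponentExists.of_finite.exponent_pos
  have hce' : ∀ g h : G, ⁅g, h⁆ ^ e' = 1 := fun g h => by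
    have hmem : ⁅g, h⁆ ∈ commutator G := by
      rw [commutator_def]
      exact Subgroup.commutator_mem_commutator (Subgroup.mem_top g) (Subgroup.mem_top h)
    have h1 : (⟨⁅g, h⁆, hmem⟩ : commutator G) ^ e' = 1 := Monoid.pow_exponent_eq_one _
    have h2 := congrArg (Subgroup.subtype _) h1
    simpa using h2
  have hfe' : f ∣ e' := by
    apply Monoid.exponent_dvd_of_forall_pow_eq_one
    intro q
    induction q using QuotientGroup.induction_on with
    | _ g =>
      rw [← QuotientGroup.mk_pow, QuotientGroup.eq_one_iff]
      rw [Subgroup.mem_center_iff]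
      intro k
      have h1 : ⁅g ^ e', k⁆ = ⁅g, k⁆ ^ e' := (commL hz k).map_pow g e'
      have h2 : ⁅g ^ e', k⁆ = 1 := by rw [h1, hce' g k]
      exact (commutatorElement_eq_one_iff_mul_comm.mp h2).symm
  obtain ⟨a, b, c, hw⟩ := normal_form hz w
  have h1 : wordImage G w = Sset G a b c := by
    ext x
    constructor
    · rintro ⟨fn, rfl⟩
      exact ⟨(fn 0, fn 1), (hw fn).symm⟩
    · rintro ⟨⟨g, h⟩, rfl⟩
      refine ⟨![g, h], ?_⟩
      show FreeGroup.lift ![g, h] w = _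
      rw [hw]
      simp
  obtain ⟨A, C, h2⟩ := Sreduce hz b.natAbs a b c le_rfl
  obtain ⟨m, U, V, hm_pos, hm_dvd, hmu1, hmu2, hmu3⟩ := exists_gcd_unit A e he_pos
  obtain ⟨n, U', V', hn_pos, hn_dvd, hnu1, hnu2, hnu3⟩ := exists_gcd_unit C f hf_pos
  have hmu3' : (f : ℤ) ∣ U * V - 1 := dvd_trans (Int.natCast_dvd_natCast.mpr hfe) hmu3
  refine ⟨m, n, hm_pos, hn_pos, hm_dvd, hn_dvd,
    Nat.le_of_dvd he'_pos (hn_dvd.trans hfe'), ?_⟩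
  have h3 : wordImage G ((FreeGroup.of (0 : Fin 2)) ^ m *
      ⁅(FreeGroup.of (0 : Fin 2)), (FreeGroup.of (1 : Fin 2)) ^ n⁆) = Sset G (m : ℤ) 0 (n : ℤ) := by
    have key : ∀ fn : Fin 2 → G,
        FreeGroup.lift fn ((FreeGroup.of (0 : Fin 2)) ^ m *
          ⁅(FreeGroup.of (0 : Fin 2)), (FreeGroup.of (1 : Fin 2)) ^ n⁆) =
        (fn 0) ^ (m : ℤ) * (fn 1) ^ (0 : ℤ) * ⁅fn 0, fn 1⁆ ^ (n : ℤ) := by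
      intro fn
      rw [map_mul, map_pow, map_commutatorElement, map_pow, FreeGroup.lift_apply_of,
        FreeGroup.lift_apply_of]
      have hc : ⁅fn 0, (fn 1) ^ n⁆ = ⁅fn 0, fn 1⁆ ^ n := (commR hz (fn 0)).map_pow (fn 1) n
      rw [hc, zpow_natCast, zpow_natCast, zpow_zero, mul_one]
    ext x
    constructor
    · rintro ⟨fn, rfl⟩
      exact ⟨(fn 0, fn 1), (key fn).symm⟩
    · rintro ⟨⟨g, h⟩, rfl⟩
      refine ⟨![g, h], ?_⟩
      show FreeGroup.lift ![g, h] _ = _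
      rw [key]
      simp
  rw [h1, h2, h3]
  exact S_eq hz e f he hf A C m n U V U' V' hmu1 hmu2 hmu3' hnu1 hnu2

/-- For a finite nilpotent group of class at most 2, every word image in two variables
is the image of a word of the form x^m[x,y^n] with m ∣ exp(G), n ∣ exp(G/Z(G)),
n ≤ exp([G,G]). -/
theorem nilpotent_class_two_word_image (G : Type*) [Group G] [Finite G]
    (hG : commutator G ≤ Subgroup.center G) (w : FreeGroup (Fin 2)) :
    ∃ m n : ℕ, 0 < m ∧ 0 < n ∧ m ∣ Monoid.exponent G ∧
      n ∣ Monoid.exponent (G ⧸ Subgroup.center G) ∧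
      n ≤ Monoid.exponent (commutator G) ∧
      wordImage G w =
        wordImage G ((FreeGroup.of (0 : Fin 2)) ^ m *
          ⁅(FreeGroup.of (0 : Fin 2)), (FreeGroup.of (1 : Fin 2)) ^ n⁆) := by
  exact nilpotent_class_two_word_image' G hG w
end

section
/- Let p be a prime and G an extraspecial p-group. Then for every d ≥ 1 and every word w in the free group F_d, the word image w(G) is one of {1}, Z(G) or G; moreover each of {1}, Z(G) and G occurs as a word image of G. -/
open Subgroup

open Subgroup

open scoped commutatorElement

lemma pow_p_mem_coatom {p : ℕ} (hp : p.Prime) {G : Type*} [Group G] [Finite G]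
    (hpg : IsPGroup p G) {M : Subgroup G} (hM : IsCoatom M) (g : G) : g ^ p ∈ M := by
  haveI : Fact p.Prime := ⟨hp⟩
  haveI : M.Normal :=
    NormalizerCondition.normal_of_coatom M
      (normalizerCondition_of_isNilpotent (h := hpg.isNilpotent)) hM
  have hQ : IsPGroup p (G ⧸ M) := hpg.to_quotient M
  rw [← QuotientGroup.eq_one_iff]
  by_contra hne
  set x : G ⧸ M := (g : G ⧸ M) with hx
  have hxp : x ^ p ≠ 1 := by
    intro h
    apply hne
    rw [show ((g ^ p : G) : G ⧸ M) = x ^ p from by simp [hx], h]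
  have hsub : ∀ K : Subgroup (G ⧸ M), K = ⊥ ∨ K = ⊤ := by
    intro K
    have hle : M ≤ K.comap (QuotientGroup.mk' M) := by
      intro m hm
      simp only [Subgroup.mem_comap, QuotientGroup.mk'_apply]
      rw [QuotientGroup.eq_one_iff m |>.mpr hm]
      exact K.one_mem
    have hsurj : Function.Surjective (QuotientGroup.mk' M) := QuotientGroup.mk'_surjective M
    rcases hle.lt_or_eq with hlt | heq
    · right
      have : K.comap (QuotientGroup.mk' M) = ⊤ := hM.2 _ hlt
      have := map_comap_eq_self_of_surjective hsurj K
      rw [this.symm, ‹K.comap (QuotientGroup.mk' M) = ⊤›]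
      rw [← MonoidHom.range_eq_map]
      exact (MonoidHom.range_eq_top).mpr hsurj
    · left
      have := map_comap_eq_self_of_surjective hsurj K
      rw [← this, ← heq]
      refine le_bot_iff.mp ?_
      intro y hy
      obtain ⟨m, hm, rfl⟩ := hy
      simpa using (QuotientGroup.eq_one_iff m).mpr hm
  have hK : Subgroup.zpowers (x ^ p) = ⊤ := by
    rcases hsub (Subgroup.zpowers (x ^ p)) with h | h
    · exact absurd (Subgroup.zpowers_eq_bot.mp h) hxp
    · exact h
  have hxmem : x ∈ Subgroup.zpowers (x ^ p) := hK ▸ Subgroup.mem_top x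
  obtain ⟨m, hm⟩ := hxmem
  -- hm : (x ^ p) ^ m = x
  have hm' : (x ^ p) ^ m = x := hm
  have h1 : x ^ ((p : ℤ) * m - 1) = 1 := by
    rw [zpow_sub, zpow_mul, zpow_natCast, zpow_one, hm', mul_inv_cancel]
  have hdvd : (↑(orderOf x) : ℤ) ∣ ((p : ℤ) * m - 1) := orderOf_dvd_iff_zpow_eq_one.mpr h1
  have hx1 : x ≠ 1 := by intro h; exact hxp (by rw [h, one_pow])
  obtain ⟨k, hk⟩ := hQ x
  obtain ⟨j, hjk, hj⟩ := (Nat.dvd_prime_pow hp).mp (orderOf_dvd_of_pow_eq_one hk)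
  have hj0 : j ≠ 0 := by
    intro h; subst h
    rw [pow_zero] at hj
    exact hx1 (orderOf_eq_one_iff.mp hj)
  have hpdvd : (p : ℤ) ∣ (orderOf x : ℤ) := by
    exact_mod_cast Int.natCast_dvd_natCast.mpr (hj ▸ dvd_pow_self p hj0)
  have : (p : ℤ) ∣ 1 := by
    have := hpdvd.trans hdvd
    have h2 : (p : ℤ) ∣ (p : ℤ) * m := Dvd.intro m rfl
    have h3 : (p:ℤ) ∣ ((p : ℤ) * m - ((p : ℤ) * m - 1)) := dvd_sub h2 this
    simpa using h3
  have := Int.le_of_dvd one_pos this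
  have := hp.one_lt
  omega

lemma pow_p_mem_frattini {p : ℕ} (hp : p.Prime) {G : Type*} [Group G] [Finite G]
    (hpg : IsPGroup p G) (g : G) : g ^ p ∈ frattini G := by
  show g ^ p ∈ ⨅ a ∈ {H : Subgroup G | IsCoatom H}, a
  rw [Subgroup.mem_iInf]
  intro M
  rw [Subgroup.mem_iInf]
  intro hM
  exact pow_p_mem_coatom hp hpg hM g

section Class2
variable {G : Type*} [Group G] (hc : ∀ a b : G, ⁅a, b⁆ ∈ Subgroup.center G)

-- g * z = z * g for central z
lemma central_comm {z : G} (hz : z ∈ Subgroup.center G) (g : G) : g * z = z * g :=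
  Subgroup.mem_center_iff.mp hz g

include hc

lemma comm_hom_left (u₁ u₂ v : G) : ⁅u₁ * u₂, v⁆ = ⁅u₁, v⁆ * ⁅u₂, v⁆ := by
  have h2 : u₂ * v * u₂⁻¹ = ⁅u₂, v⁆ * v := by group
  calc ⁅u₁ * u₂, v⁆ = u₁ * (u₂ * v * u₂⁻¹) * u₁⁻¹ * v⁻¹ := by group
    _ = u₁ * (⁅u₂, v⁆ * v) * u₁⁻¹ * v⁻¹ := by rw [h2]
    _ = u₁ * ⁅u₂, v⁆ * (v * u₁⁻¹ * v⁻¹) := by group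
    _ = ⁅u₂, v⁆ * u₁ * (v * u₁⁻¹ * v⁻¹) := by rw [central_comm (hc u₂ v) u₁]
    _ = ⁅u₂, v⁆ * ⁅u₁, v⁆ := by group
    _ = ⁅u₁, v⁆ * ⁅u₂, v⁆ := (central_comm (hc u₂ v) _).symm

lemma comm_central_left {c : G} (hcen : c ∈ Subgroup.center G) (u v : G) :
    ⁅u * c, v⁆ = ⁅u, v⁆ := by
  rw [comm_hom_left hc]
  have h1 : ⁅c, v⁆ = 1 := by
    rw [commutatorElement_eq_one_iff_commute]
    exact (central_comm hcen v).symm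
  rw [h1, mul_one]

lemma pow_comm_aux (x y : G) (n : ℕ) : y ^ n * x = x * y ^ n * ⁅y, x⁆ ^ n := by
  induction n with
  | zero => simp
  | succ n ih =>
    calc y ^ (n+1) * x = y * (y ^ n * x) := by rw [pow_succ']; group
    _ = y * (x * y ^ n * ⁅y, x⁆ ^ n) := by rw [ih]
    _ = (y * x) * (y ^ n * ⁅y, x⁆ ^ n) := by simp only [mul_assoc]
    _ = (⁅y, x⁆ * (x * y)) * (y ^ n * ⁅y, x⁆ ^ n) := by
          rw [show y * x = ⁅y, x⁆ * (x * y) from by group]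
    _ = ((x * y) * ⁅y, x⁆) * (y ^ n * ⁅y, x⁆ ^ n) := by
          rw [central_comm (hc y x) (x * y)]
    _ = x * y * (⁅y, x⁆ * y ^ n) * ⁅y, x⁆ ^ n := by simp only [mul_assoc]
    _ = x * y * (y ^ n * ⁅y, x⁆) * ⁅y, x⁆ ^ n := by rw [central_comm (hc y x) (y ^ n)]
    _ = x * (y * y ^ n) * (⁅y, x⁆ * ⁅y, x⁆ ^ n) := by simp only [mul_assoc]
    _ = x * y ^ (n+1) * ⁅y, x⁆ ^ (n+1) := by rw [← pow_succ', ← pow_succ']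

lemma mul_pow_central (x y : G) (n : ℕ) :
    (x * y) ^ n = x ^ n * y ^ n * ⁅y, x⁆ ^ n.choose 2 := by
  induction n with
  | zero => simp
  | succ n ih =>
    have hT : ⁅y, x⁆ ^ n.choose 2 ∈ Subgroup.center G := Subgroup.pow_mem _ (hc y x) _
    have hch : (n+1).choose 2 = n.choose 2 + n := by
      rw [Nat.choose_succ_succ, Nat.choose_one_right, Nat.add_comm]
    calc (x * y) ^ (n+1) = (x ^ n * y ^ n * ⁅y, x⁆ ^ n.choose 2) * (x * y) := by
          rw [pow_succ, ih]
    _ = x ^ n * y ^ n * (⁅y, x⁆ ^ n.choose 2 * x) * y := by group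
    _ = x ^ n * y ^ n * (x * ⁅y, x⁆ ^ n.choose 2) * y := by rw [← central_comm hT x]
    _ = x ^ n * (y ^ n * x) * (⁅y, x⁆ ^ n.choose 2 * y) := by group
    _ = x ^ n * (y ^ n * x) * (y * ⁅y, x⁆ ^ n.choose 2) := by rw [← central_comm hT y]
    _ = x ^ n * (x * y ^ n * ⁅y, x⁆ ^ n) * (y * ⁅y, x⁆ ^ n.choose 2) := by
          rw [pow_comm_aux hc x y n]
    _ = x ^ (n+1) * y ^ n * (⁅y, x⁆ ^ n * y) * ⁅y, x⁆ ^ n.choose 2 := by group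
    _ = x ^ (n+1) * y ^ n * (y * ⁅y, x⁆ ^ n) * ⁅y, x⁆ ^ n.choose 2 := by
          rw [← central_comm (Subgroup.pow_mem _ (hc y x) n) y]
    _ = x ^ (n+1) * y ^ (n+1) * ⁅y, x⁆ ^ (n.choose 2 + n) := by rw [pow_add]; group
    _ = x ^ (n+1) * y ^ (n+1) * ⁅y, x⁆ ^ (n+1).choose 2 := by rw [hch]

lemma mul_zpow_central (x y : G) (a : ℤ) :
    ∃ c ∈ Subgroup.center G, (x * y) ^ a = x ^ a * y ^ a * c := by
  rcases a with n | n
  · exact ⟨⁅y, x⁆ ^ n.choose 2, Subgroup.pow_mem _ (hc y x) _, by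
      simpa using mul_pow_central hc x y n⟩
  · refine ⟨⁅(y⁻¹) ^ (n+1), (x⁻¹) ^ (n+1)⁆ * ⁅x⁻¹, y⁻¹⁆ ^ ((n+1).choose 2),
      Subgroup.mul_mem _ (hc _ _) (Subgroup.pow_mem _ (hc _ _) _), ?_⟩
    have hcent := hc ((y⁻¹) ^ (n+1)) ((x⁻¹) ^ (n+1))
    calc (x * y) ^ (Int.negSucc n)
        = (y⁻¹ * x⁻¹) ^ (n+1) := by
          rw [zpow_negSucc, ← inv_pow, mul_inv_rev]
      _ = (y⁻¹) ^ (n+1) * (x⁻¹) ^ (n+1) * ⁅x⁻¹, y⁻¹⁆ ^ ((n+1).choose 2) :=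
          mul_pow_central hc y⁻¹ x⁻¹ (n+1)
      _ = (⁅(y⁻¹) ^ (n+1), (x⁻¹) ^ (n+1)⁆ * ((x⁻¹) ^ (n+1) * (y⁻¹) ^ (n+1))) *
            ⁅x⁻¹, y⁻¹⁆ ^ ((n+1).choose 2) := by
          rw [show (y⁻¹) ^ (n+1) * (x⁻¹) ^ (n+1)
            = ⁅(y⁻¹) ^ (n+1), (x⁻¹) ^ (n+1)⁆ * ((x⁻¹) ^ (n+1) * (y⁻¹) ^ (n+1)) from by group]
      _ = (((x⁻¹) ^ (n+1) * (y⁻¹) ^ (n+1)) * ⁅(y⁻¹) ^ (n+1), (x⁻¹) ^ (n+1)⁆) *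
            ⁅x⁻¹, y⁻¹⁆ ^ ((n+1).choose 2) := by
          rw [central_comm hcent ((x⁻¹) ^ (n+1) * (y⁻¹) ^ (n+1))]
      _ = x ^ (Int.negSucc n) * y ^ (Int.negSucc n) *
            (⁅(y⁻¹) ^ (n+1), (x⁻¹) ^ (n+1)⁆ * ⁅x⁻¹, y⁻¹⁆ ^ ((n+1).choose 2)) := by
          rw [zpow_negSucc, zpow_negSucc, ← inv_pow, ← inv_pow]
          simp only [mul_assoc]

lemma comm_zpow_hom (v : G) (a : ℤ) (x y : G) :
    ⁅(x * y) ^ a, v⁆ = ⁅x ^ a, v⁆ * ⁅y ^ a, v⁆ := by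
  obtain ⟨c, hcen, hcn⟩ := mul_zpow_central hc x y a
  rw [hcn, comm_central_left hc hcen, comm_hom_left hc]

end Class2

lemma central_swap_l {G : Type*} [Group G] {z : G} (hz : z ∈ Subgroup.center G) (g r : G) :
    z * (g * r) = g * (z * r) := by
  rw [← mul_assoc, ← Subgroup.mem_center_iff.mp hz g, mul_assoc]

/-- The exponent sum of a word at generator `i`. -/
def expSum {d : ℕ} (i : Fin d) : FreeGroup (Fin d) →* Multiplicative ℤ :=
  FreeGroup.lift fun j => Multiplicative.ofAdd (if j = i then (1:ℤ) else 0)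

lemma expSum_of {d : ℕ} (i j : Fin d) :
    expSum i (FreeGroup.of j) = Multiplicative.ofAdd (if j = i then (1:ℤ) else 0) := by
  simp [expSum]

lemma lift_single {G : Type*} [Group G] {d : ℕ} (i : Fin d) (g : G) (w : FreeGroup (Fin d)) :
    FreeGroup.lift (fun j => if j = i then g else 1) w
      = g ^ (Multiplicative.toAdd (expSum i w)) := by
  have h : (FreeGroup.lift (fun j => if j = i then g else 1) : FreeGroup (Fin d) →* G)
      = (zpowersHom G g).comp (expSum i) := by
    apply FreeGroup.ext_hom
    intro a
    simp only [FreeGroup.lift_apply_of, MonoidHom.comp_apply, expSum_of, zpowersHom_apply]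
    split_ifs <;> simp
  rw [h]
  rfl

section Deriv
variable {G : Type*} [Group G] (hc : ∀ a b : G, ⁅a, b⁆ ∈ Subgroup.center G)
include hc

lemma wordDeriv {d : ℕ} (i : Fin d) (g : Fin d → G) (w : FreeGroup (Fin d)) :
    ∃ C : G → Subgroup.center G, (∀ x y : G, C (x * y) = C x * C y) ∧
      ∀ x : G, FreeGroup.lift (Function.update g i (g i * x)) w
          = FreeGroup.lift g w * x ^ (Multiplicative.toAdd (expSum i w)) * (C x : G) := by
  induction w using FreeGroup.induction_on with
  | C1 =>
    refine ⟨fun _ => 1, by simp, fun x => ?_⟩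
    simp
  | of j =>
    by_cases hj : j = i
    · subst hj
      refine ⟨fun _ => 1, by simp, fun x => ?_⟩
      simp only [FreeGroup.lift_apply_of, Function.update_self, expSum_of, if_pos rfl]
      simp
    · refine ⟨fun _ => 1, by simp, fun x => ?_⟩
      simp only [FreeGroup.lift_apply_of, Function.update_of_ne hj, expSum_of, if_neg hj]
      simp
  | inv_of j _ =>
    by_cases hj : j = i
    · subst hj
      refine ⟨fun x => ⟨⁅x, g j⁆, hc _ _⟩, ?_, fun x => ?_⟩
      · intro x y
        ext
        exact comm_hom_left hc x y (g j)
      · simp only [map_inv, FreeGroup.lift_apply_of, Function.update_self, expSum_of, if_pos rfl]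
        show (g j * x)⁻¹ = (g j)⁻¹ * x ^ (Multiplicative.toAdd (Multiplicative.ofAdd (1:ℤ))⁻¹) * ⁅x, g j⁆
        rw [show Multiplicative.toAdd (Multiplicative.ofAdd (1:ℤ))⁻¹ = -1 from rfl]
        simp only [commutatorElement_def]
        group
    · refine ⟨fun _ => 1, by simp, fun x => ?_⟩
      simp only [map_inv, FreeGroup.lift_apply_of, Function.update_of_ne hj, expSum_of, if_neg hj]
      simp
  | mul w₁ w₂ ih₁ ih₂ =>
    obtain ⟨C₁, h₁m, h₁⟩ := ih₁
    obtain ⟨C₂, h₂m, h₂⟩ := ih₂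
    set A := FreeGroup.lift g w₁ with hA
    set B := FreeGroup.lift g w₂ with hB
    set a := Multiplicative.toAdd (expSum i w₁) with ha
    set b := Multiplicative.toAdd (expSum i w₂) with hb
    refine ⟨fun x => (⟨⁅x ^ (-a), B⁻¹⁆, hc _ _⟩ : Subgroup.center G) * (C₁ x * C₂ x),
      ?_, fun x => ?_⟩
    · intro x y
      have hK : (⟨⁅(x*y) ^ (-a), B⁻¹⁆, hc _ _⟩ : Subgroup.center G)
          = ⟨⁅x ^ (-a), B⁻¹⁆, hc _ _⟩ * ⟨⁅y ^ (-a), B⁻¹⁆, hc _ _⟩ := by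
        ext
        exact comm_zpow_hom hc B⁻¹ (-a) x y
      dsimp only
      rw [hK, h₁m, h₂m]
      ac_rfl
    · have expmul : Multiplicative.toAdd (expSum i (w₁ * w₂)) = a + b := by
        rw [map_mul]; rfl
      rw [map_mul, h₁ x, h₂ x, expmul]
      simp only [Subgroup.coe_mul, map_mul]
      simp only [mul_assoc]
      rw [central_swap_l (C₁ x).2 B, central_swap_l (C₁ x).2 (x ^ b)]
      rw [show x ^ a * (B * (x ^ b * ((C₁ x : G) * (C₂ x : G))))
          = B * (x ^ a * (⁅x ^ (-a), B⁻¹⁆ * (x ^ b * ((C₁ x : G) * (C₂ x : G))))) from by group]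
      rw [central_swap_l (hc (x ^ (-a)) B⁻¹) (x ^ b)]
      rw [show x ^ a * (x ^ b * (⁅x ^ (-a), B⁻¹⁆ * ((C₁ x : G) * (C₂ x : G))))
          = x ^ (a + b) * (⁅x ^ (-a), B⁻¹⁆ * ((C₁ x : G) * (C₂ x : G))) from by
        rw [← mul_assoc, ← zpow_add]]

end Deriv

lemma subgroup_bot_or_top {p : ℕ} (hp : p.Prime) {K : Type*} [Group K] [Finite K]
    (hK : Nat.card K = p) (H : Subgroup K) : H = ⊥ ∨ H = ⊤ := by
  have hdvd : Nat.card H ∣ p := hK ▸ Subgroup.card_subgroup_dvd_card H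
  rcases (Nat.Prime.eq_one_or_self_of_dvd hp _ hdvd) with h | h
  · left; exact Subgroup.eq_bot_of_card_le H (le_of_eq h)
  · right; exact Subgroup.eq_top_of_card_eq H (h.trans hK.symm)

lemma lift_const_one {G : Type*} [Group G] {d : ℕ} (w : FreeGroup (Fin d)) :
    FreeGroup.lift (fun _ : Fin d => (1:G)) w = 1 := by
  have h : (FreeGroup.lift (fun _ : Fin d => (1:G)) : FreeGroup (Fin d) →* G) = 1 := by
    apply FreeGroup.ext_hom; intro a; simp
  rw [h]; rfl

-- surjectivity of g ↦ g ^ e when p ∤ e in a finite p-group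
lemma zpow_surj_of_not_dvd {p : ℕ} (hp : p.Prime) {G : Type*} [Group G] [Finite G]
    (hpg : IsPGroup p G) {e : ℤ} (he : ¬ (p:ℤ) ∣ e) (h : G) : ∃ g : G, g ^ e = h := by
  haveI : Fact p.Prime := ⟨hp⟩
  obtain ⟨n, hn⟩ := IsPGroup.iff_card.mp hpg
  have hq : ¬ p ∣ e.natAbs := fun hd => he (Int.natCast_dvd_natCast.mpr hd |>.trans (Int.natAbs_dvd.mpr dvd_rfl))
  have hcop : Nat.Coprime (Nat.card G) e.natAbs := by
    rw [hn]
    exact Nat.Coprime.pow_left n ((Nat.Prime.coprime_iff_not_dvd hp).mpr hq)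
  have hcopz : IsCoprime (e : ℤ) ((Nat.card G : ℤ)) := by
    rw [Int.isCoprime_iff_gcd_eq_one]
    have : Int.gcd e (Nat.card G : ℤ) = Nat.gcd e.natAbs (Nat.card G) := by
      simp [Int.gcd]
    rw [this, Nat.gcd_comm]
    exact hcop
  obtain ⟨a, b, hab⟩ := hcopz
  refine ⟨h ^ a, ?_⟩
  rw [← zpow_mul]
  have hae : a * e = 1 - b * (Nat.card G : ℤ) := by linarith
  have h1 : h ^ ((Nat.card G : ℤ)) = 1 := by rw [zpow_natCast, pow_card_eq_one']
  calc h ^ (a * e) = h ^ ((1:ℤ) - b * (Nat.card G : ℤ)) := by rw [hae]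
    _ = h ^ (1:ℤ) * (h ^ ((Nat.card G : ℤ) * b))⁻¹ := by rw [zpow_sub, mul_comm b]
    _ = h * ((h ^ ((Nat.card G : ℤ))) ^ b)⁻¹ := by rw [zpow_one, zpow_mul]
    _ = h := by rw [h1]; simp


lemma mem_wordImage {G : Type*} [Group G] {d : ℕ} {w : FreeGroup (Fin d)} {g : G} :
    g ∈ wordImage G w ↔ ∃ f : Fin d → G, FreeGroup.lift f w = g := Set.mem_range

/-- In an extraspecial p-group the only word images are {1}, Z(G) and G,
and each of these occurs as a word image. -/
theorem extraspecial_word_images {p : ℕ} (hp : p.Prime) (G : Type*) [Group G]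
    [Finite G] (hG : IsExtraspecial p G) :
    (∀ (d : ℕ), 1 ≤ d → ∀ w : FreeGroup (Fin d),
        wordImage G w = {(1 : G)} ∨
        wordImage G w = (Subgroup.center G : Set G) ∨
        wordImage G w = (Set.univ : Set G)) ∧
    (∃ (d : ℕ) (_ : 1 ≤ d) (w : FreeGroup (Fin d)), wordImage G w = {(1 : G)}) ∧
    (∃ (d : ℕ) (_ : 1 ≤ d) (w : FreeGroup (Fin d)),
        wordImage G w = (Subgroup.center G : Set G)) ∧
    (∃ (d : ℕ) (_ : 1 ≤ d) (w : FreeGroup (Fin d)),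
        wordImage G w = (Set.univ : Set G)) := by
  classical
  obtain ⟨hpg, hzc, hzf, hcard⟩ := hG
  haveI : Fact p.Prime := ⟨hp⟩
  have hc : ∀ a b : G, ⁅a, b⁆ ∈ Subgroup.center G := by
    intro a b
    rw [hzc, commutator_def]
    exact Subgroup.commutator_mem_commutator (Subgroup.mem_top a) (Subgroup.mem_top b)
  have hpZ : ∀ g : G, g ^ p ∈ Subgroup.center G := by
    intro g; rw [hzf]; exact pow_p_mem_frattini hp hpg g
  have hZpG : ∀ z ∈ Subgroup.center G, z ^ p = 1 := by
    intro z hz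
    have h1 : (⟨z, hz⟩ : Subgroup.center G) ^ Nat.card (Subgroup.center G) = 1 :=
      pow_card_eq_one'
    rw [hcard] at h1
    simpa using congrArg Subtype.val h1
  have part1 : ∀ (d : ℕ), 1 ≤ d → ∀ w : FreeGroup (Fin d),
      wordImage G w = {(1 : G)} ∨
      wordImage G w = (Subgroup.center G : Set G) ∨
      wordImage G w = (Set.univ : Set G) := by
    intro d _ w
    by_cases hcase : ∀ i : Fin d, (p:ℤ) ∣ Multiplicative.toAdd (expSum i w)
    · -- Case 2: all exponent sums divisible by p
      have hzpow : ∀ (i : Fin d) (x : G),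
          x ^ (Multiplicative.toAdd (expSum i w)) ∈ Subgroup.center G := by
        intro i x
        obtain ⟨m, hm⟩ := hcase i
        rw [hm, zpow_mul, zpow_natCast]
        exact Subgroup.zpow_mem _ (hpZ x) m
      have hsub : ∀ f : Fin d → G, FreeGroup.lift f w ∈ Subgroup.center G := by
        intro f
        have key : ∀ s : Finset (Fin d),
            FreeGroup.lift (fun j => if j ∈ s then f j else 1) w ∈ Subgroup.center G := by
          intro s
          induction s using Finset.induction_on with
          | empty =>
            have h0 : (fun j : Fin d => if j ∈ (∅ : Finset (Fin d)) then f j else 1)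
                = fun _ : Fin d => (1:G) := by funext j; simp
            rw [h0, lift_const_one]
            exact Subgroup.one_mem _
          | @insert i s his ih =>
            have heq : (fun j : Fin d => if j ∈ insert i s then f j else 1)
                = Function.update (fun j : Fin d => if j ∈ s then f j else 1) i
                    ((fun j : Fin d => if j ∈ s then f j else 1) i *
                      (((fun j : Fin d => if j ∈ s then f j else 1) i)⁻¹ * f i)) := by
              funext j
              by_cases hj : j = i
              · subst hj; simp [Function.update_self, his]
              · simp [Function.update_of_ne hj, Finset.mem_insert, hj]
            obtain ⟨C, hCm, hC⟩ := wordDeriv hc i (fun j : Fin d => if j ∈ s then f j else 1) w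
            rw [heq, hC]
            exact Subgroup.mul_mem _ (Subgroup.mul_mem _ ih (hzpow i _)) (C _).2
        have huniv := key Finset.univ
        simpa using huniv
      by_cases htriv : ∀ (gt : Fin d → G) (i : Fin d) (x : G),
          FreeGroup.lift (Function.update gt i (gt i * x)) w = FreeGroup.lift gt w
      · -- all partial updates are trivial: word image is {1}
        left
        have hval : ∀ f : Fin d → G, FreeGroup.lift f w = 1 := by
          intro f
          have key : ∀ s : Finset (Fin d),
              FreeGroup.lift (fun j => if j ∈ s then f j else 1) w = 1 := by
            intro s
            induction s using Finset.induction_on with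
            | empty =>
              have h0 : (fun j : Fin d => if j ∈ (∅ : Finset (Fin d)) then f j else 1)
                  = fun _ : Fin d => (1:G) := by funext j; simp
              rw [h0, lift_const_one]
            | @insert i s his ih =>
              have heq : (fun j : Fin d => if j ∈ insert i s then f j else 1)
                  = Function.update (fun j : Fin d => if j ∈ s then f j else 1) i
                      ((fun j : Fin d => if j ∈ s then f j else 1) i *
                        (((fun j : Fin d => if j ∈ s then f j else 1) i)⁻¹ * f i)) := by
                funext j
                by_cases hj : j = i
                · subst hj; simp [Function.update_self, his]
                · simp [Function.update_of_ne hj, Finset.mem_insert, hj]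
              rw [heq, htriv]
              exact ih
          have huniv := key Finset.univ
          simpa using huniv
        apply Set.ext
        intro v
        rw [mem_wordImage, Set.mem_singleton_iff]
        constructor
        · rintro ⟨f, rfl⟩; exact hval f
        · rintro rfl; exact ⟨fun _ => 1, lift_const_one w⟩
      · -- some partial update is nontrivial: word image is the center
        right; left
        push_neg at htriv
        obtain ⟨gt, i, x0, hne⟩ := htriv
        obtain ⟨C, hCm, hC⟩ := wordDeriv hc i gt w
        have hPsine : x0 ^ (Multiplicative.toAdd (expSum i w)) * (C x0 : G) ≠ 1 := by
          intro h0
          apply hne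
          rw [hC x0, mul_assoc, h0, mul_one]
        rcases hp.eq_two_or_odd' with hp2 | hpodd
        · -- p = 2
          have hvex : ∃ v, v ∈ wordImage G w ∧ v ≠ 1 := by
            by_cases h1 : FreeGroup.lift gt w = 1
            · refine ⟨_, ⟨Function.update gt i (gt i * x0), rfl⟩, fun h => hne ?_⟩
              rw [h1]
              exact h
            · exact ⟨_, ⟨gt, rfl⟩, h1⟩
          obtain ⟨v, hvmem, hvne⟩ := hvex
          have hvZ : v ∈ Subgroup.center G := by
            obtain ⟨f, hf⟩ := hvmem
            rw [← hf]; exact hsub f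
          apply Set.ext
          intro z
          rw [mem_wordImage, SetLike.mem_coe]
          constructor
          · rintro ⟨f, rfl⟩; exact hsub f
          · intro hz
            have hvZ' : (⟨v, hvZ⟩ : Subgroup.center G) ≠ 1 :=
              fun h => hvne (congrArg Subtype.val h)
            have htop : Subgroup.zpowers (⟨v, hvZ⟩ : Subgroup.center G) = ⊤ := by
              rcases subgroup_bot_or_top hp hcard (Subgroup.zpowers ⟨v, hvZ⟩) with h | h
              · exact absurd (Subgroup.zpowers_eq_bot.mp h) hvZ'
              · exact h
            have hzmem : (⟨z, hz⟩ : Subgroup.center G) ∈ Subgroup.zpowers ⟨v, hvZ⟩ := by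
              rw [htop]; exact Subgroup.mem_top _
            obtain ⟨k, hk⟩ := hzmem
            have hkG : v ^ k = z := by
              have h2 := congrArg Subtype.val hk
              simpa using h2
            have hv2 : v ^ (2:ℕ) = 1 := by
              have h3 := hZpG v hvZ; rwa [hp2] at h3
            rcases Int.even_or_odd k with ⟨m, hm⟩ | ⟨m, hm⟩
            · have hz1 : z = 1 := by
                rw [← hkG, hm, ← two_mul, zpow_mul]
                rw [show ((2:ℤ)) = ((2:ℕ) : ℤ) from rfl, zpow_natCast, hv2, one_zpow]
              rw [hz1]
              exact ⟨fun _ => 1, lift_const_one w⟩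
            · have hzv : z = v := by
                rw [← hkG, hm, zpow_add, zpow_one, zpow_mul]
                rw [show ((2:ℤ)) = ((2:ℕ) : ℤ) from rfl, zpow_natCast, hv2, one_zpow, one_mul]
              rw [hzv]
              exact hvmem
        · -- p odd
          have h2p : 2 < p := by
            have h2 := hp.two_le
            have hodd := Nat.odd_iff.mp hpodd
            omega
          have hxp : ∀ x y : G, (x * y) ^ p = x ^ p * y ^ p := by
            intro x y
            rw [mul_pow_central hc x y p]
            obtain ⟨t, ht⟩ : p ∣ p.choose 2 := hp.dvd_choose_self (by norm_num) h2p
            rw [ht, pow_mul, hZpG _ (hc y x), one_pow, mul_one]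
          have hmul : ∀ (x y : G), (x*y) ^ (Multiplicative.toAdd (expSum i w))
              = x ^ (Multiplicative.toAdd (expSum i w))
                * y ^ (Multiplicative.toAdd (expSum i w)) := by
            intro x y
            obtain ⟨m, hm⟩ := hcase i
            rw [hm, zpow_mul, zpow_mul, zpow_mul, zpow_natCast, zpow_natCast, zpow_natCast, hxp]
            have hcomm : Commute (x ^ p) (y ^ p) :=
              ((Subgroup.mem_center_iff.mp (hpZ x) (y ^ p))).symm
            exact hcomm.mul_zpow m
          let Psi : G →* Subgroup.center G := {
            toFun := fun x => ⟨x ^ (Multiplicative.toAdd (expSum i w)), hzpow i x⟩ * C x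
            map_one' := by
              have hC1 : C 1 = 1 := by
                have h1 := hCm 1 1
                rw [mul_one] at h1
                exact (mul_eq_left.mp h1.symm)
              rw [hC1, mul_one]
              ext
              simp
            map_mul' := by
              intro x y
              have h1 : (⟨(x*y) ^ (Multiplicative.toAdd (expSum i w)), hzpow i (x*y)⟩
                    : Subgroup.center G)
                  = ⟨x ^ (Multiplicative.toAdd (expSum i w)), hzpow i x⟩
                    * ⟨y ^ (Multiplicative.toAdd (expSum i w)), hzpow i y⟩ := by
                ext; exact hmul x y
              rw [h1, hCm]
              ac_rfl }
          have hval : ∀ x : G,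
              (Psi x : G) = x ^ (Multiplicative.toAdd (expSum i w)) * (C x : G) :=
            fun x => rfl
          have hPsix0 : Psi x0 ≠ 1 := by
            intro h
            apply hPsine
            rw [← hval x0, h]
            rfl
          have hrange : Psi.range = ⊤ := by
            rcases subgroup_bot_or_top hp hcard Psi.range with h | h
            · exfalso
              apply hPsix0
              have hmem : Psi x0 ∈ Psi.range := ⟨x0, rfl⟩
              rw [h] at hmem
              exact Subgroup.mem_bot.mp hmem
            · exact h
          apply Set.ext
          intro z
          rw [mem_wordImage, SetLike.mem_coe]
          constructor
          · rintro ⟨f, rfl⟩; exact hsub f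
          · intro hz
            have hv0 : FreeGroup.lift gt w ∈ Subgroup.center G := hsub gt
            have hmem : ((⟨FreeGroup.lift gt w, hv0⟩ : Subgroup.center G)⁻¹ * ⟨z, hz⟩)
                ∈ Psi.range := by rw [hrange]; exact Subgroup.mem_top _
            obtain ⟨x, hx⟩ := hmem
            refine ⟨Function.update gt i (gt i * x), ?_⟩
            show FreeGroup.lift (Function.update gt i (gt i * x)) w = z
            rw [hC x, mul_assoc]
            have h2 := congrArg Subtype.val hx
            rw [hval x] at h2
            push_cast at h2
            rw [h2]
            exact mul_inv_cancel_left _ _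
    · -- Case 1: some exponent sum is not divisible by p: word image is everything
      right; right
      push_neg at hcase
      obtain ⟨i, hi⟩ := hcase
      apply Set.eq_univ_of_forall
      intro h
      obtain ⟨g, hg⟩ := zpow_surj_of_not_dvd hp hpg hi h
      refine ⟨fun j => if j = i then g else 1, ?_⟩
      show FreeGroup.lift (fun j => if j = i then g else 1) w = h
      rw [lift_single]
      exact hg
  refine ⟨part1, ⟨1, le_refl 1, 1, ?_⟩, ?_, ⟨1, le_refl 1, FreeGroup.of 0, ?_⟩⟩
  · apply Set.ext
    intro v
    rw [mem_wordImage, Set.mem_singleton_iff]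
    constructor
    · rintro ⟨f, rfl⟩; exact map_one _
    · rintro rfl; exact ⟨fun _ => 1, map_one _⟩
  · -- center is a word image: the commutator word
    refine ⟨2, by norm_num, ⁅FreeGroup.of (0 : Fin 2), FreeGroup.of (1 : Fin 2)⁆, ?_⟩
    have hvals : ∀ f : Fin 2 → G,
        FreeGroup.lift f ⁅FreeGroup.of (0 : Fin 2), FreeGroup.of (1 : Fin 2)⁆ = ⁅f 0, f 1⁆ := by
      intro f
      rw [map_commutatorElement]
      simp
    obtain ⟨a, b, hab⟩ : ∃ a b : G, ⁅a, b⁆ ≠ 1 := by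
      by_contra hno
      push_neg at hno
      have hbot : _root_.commutator G = ⊥ := by
        rw [_root_.commutator_def G, eq_bot_iff]
        refine (Subgroup.commutator_le).mpr fun a _ b _ => ?_
        rw [hno a b]
        exact Subgroup.one_mem ⊥
      have hp1 : p = 1 := by
        rw [← hcard, hzc, hbot]
        exact Subgroup.card_bot
      exact absurd hp1 (Nat.Prime.one_lt hp).ne'
    have hmem : ⁅a, b⁆ ∈ wordImage G ⁅FreeGroup.of (0 : Fin 2), FreeGroup.of (1 : Fin 2)⁆ := by
      rw [mem_wordImage]
      refine ⟨![a, b], ?_⟩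
      rw [hvals]
      simp
    rcases part1 2 (by norm_num) ⁅FreeGroup.of (0 : Fin 2), FreeGroup.of (1 : Fin 2)⁆ with h | h | h
    · exfalso
      apply hab
      rw [h] at hmem
      exact hmem
    · exact h
    · exfalso
      apply hab
      have hbmem : ∀ g : G, g ∈ Subgroup.center G := by
        intro g
        have hg : g ∈ wordImage G ⁅FreeGroup.of (0 : Fin 2), FreeGroup.of (1 : Fin 2)⁆ := by
          rw [h]; trivial
        rw [mem_wordImage] at hg
        obtain ⟨f, hf⟩ := hg
        rw [← hf, hvals]
        exact hc _ _
      exact commutatorElement_eq_one_iff_mul_comm.mpr (Subgroup.mem_center_iff.mp (hbmem b) a)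
  · apply Set.eq_univ_of_forall
    intro g
    refine ⟨fun _ => g, ?_⟩
    simp
end

section
/- Let G be an extraspecial 2-group and g, h ∈ G. Then there exists an automorphism of G mapping g to h if and only if g and h have the same order and (g ∈ Z(G) if and only if h ∈ Z(G)). -/
set_option linter.unusedSectionVars false

open scoped commutatorElement

namespace ExtraspecialAux

variable {G : Type*} [Group G]

/-- Bundled context: `z` is the unique nontrivial central element, and all
commutators are central. -/
structure Ctx (G : Type*) [Group G] where
  z : G
  hzc : z ∈ Subgroup.center G
  hz1 : z ≠ 1
  hzz : z * z = 1
  hmem : ∀ w ∈ Subgroup.center G, w = 1 ∨ w = z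
  hcen : ∀ a b : G, ⁅a, b⁆ ∈ Subgroup.center G

variable (c : Ctx G)
include c

lemma Ctx.zcomm (x : G) : x * c.z = c.z * x :=
  Subgroup.mem_center_iff.mp c.hzc x

lemma Ctx.zmove (x w : G) : x * (c.z * w) = c.z * (x * w) := by
  rw [← mul_assoc, c.zcomm, mul_assoc]

lemma Ctx.ccomm (a b x : G) : x * ⁅a, b⁆ = ⁅a, b⁆ * x :=
  Subgroup.mem_center_iff.mp (c.hcen a b) x

lemma Ctx.cmove (a b x w : G) : x * (⁅a, b⁆ * w) = ⁅a, b⁆ * (x * w) := by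
  rw [← mul_assoc, c.ccomm, mul_assoc]

lemma Ctx.swap (a b : G) : a * b = ⁅a, b⁆ * (b * a) := by
  rw [commutatorElement_def]; group

lemma Ctx.comm_mul_left (a b x : G) : ⁅a * b, x⁆ = ⁅a, x⁆ * ⁅b, x⁆ := by
  calc ⁅a * b, x⁆ = a * ⁅b, x⁆ * (x * a⁻¹ * x⁻¹) := by
        rw [commutatorElement_def, commutatorElement_def]; group
    _ = ⁅b, x⁆ * a * (x * a⁻¹ * x⁻¹) := by rw [c.ccomm b x a]
    _ = ⁅b, x⁆ * ⁅a, x⁆ := by rw [commutatorElement_def]; group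
    _ = ⁅a, x⁆ * ⁅b, x⁆ := (c.ccomm b x ⁅a, x⁆).symm

lemma Ctx.cd (a b : G) : ⁅a, b⁆ = 1 ∨ ⁅a, b⁆ = c.z := c.hmem _ (c.hcen a b)

lemma Ctx.comm_sq (a b : G) : ⁅a, b⁆ * ⁅a, b⁆ = 1 := by
  rcases c.cd a b with h | h <;> rw [h] <;> simp [c.hzz]

lemma Ctx.comm_inv (a b : G) : ⁅a, b⁆⁻¹ = ⁅a, b⁆ := by
  rw [inv_eq_of_mul_eq_one_right (c.comm_sq a b)]

lemma Ctx.comm_symm (a b : G) : ⁅a, b⁆ = ⁅b, a⁆ := by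
  rw [← commutatorElement_inv, c.comm_inv]

lemma Ctx.comm_mul_right (x a b : G) : ⁅x, a * b⁆ = ⁅x, a⁆ * ⁅x, b⁆ := by
  rw [c.comm_symm x (a * b), c.comm_mul_left, c.comm_symm a x, c.comm_symm b x]

lemma Ctx.comm_self (a : G) : ⁅a, a⁆ = 1 := by
  rw [commutatorElement_def]; group

lemma Ctx.comm_one_right (a : G) : ⁅a, (1 : G)⁆ = 1 := by
  rw [commutatorElement_def]; group

lemma Ctx.comm_inv_right (x a : G) : ⁅x, a⁻¹⁆ = ⁅x, a⁆ := by
  have h : ⁅x, a⁆ * ⁅x, a⁻¹⁆ = 1 := by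
    rw [← c.comm_mul_right, mul_inv_cancel, c.comm_one_right]
  calc ⁅x, a⁻¹⁆ = ⁅x, a⁆ * ⁅x, a⁆ * ⁅x, a⁻¹⁆ := by
        rw [c.comm_sq, one_mul]
    _ = ⁅x, a⁆ := by rw [mul_assoc, h, mul_one]

lemma Ctx.comm_inv_left (x a : G) : ⁅x⁻¹, a⁆ = ⁅x, a⁆ := by
  rw [c.comm_symm, c.comm_inv_right, c.comm_symm]

lemma Ctx.sq_central (g : G) : g * g ∈ Subgroup.center G := by
  rw [Subgroup.mem_center_iff]
  intro x
  rw [← mul_assoc]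
  calc x * g * g = ⁅x, g⁆ * (g * (x * g)) := by rw [c.swap x g]; group
    _ = ⁅x, g⁆ * (g * (⁅x, g⁆ * (g * x))) := by rw [c.swap x g]
    _ = ⁅x, g⁆ * (⁅x, g⁆ * (g * (g * x))) := by rw [c.cmove]
    _ = (⁅x, g⁆ * ⁅x, g⁆) * (g * (g * x)) := by rw [mul_assoc]
    _ = g * g * x := by rw [c.comm_sq, one_mul, mul_assoc]

lemma Ctx.sq_vals (g : G) : g * g = 1 ∨ g * g = c.z := c.hmem _ (c.sq_central g)

lemma Ctx.sq_mul (a b : G) : (a * b) * (a * b) = ⁅a, b⁆ * ((a * a) * (b * b)) := by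
  calc (a * b) * (a * b) = a * (b * a) * b := by group
    _ = a * (⁅b, a⁆ * (a * b)) * b := by rw [c.swap b a]
    _ = ⁅b, a⁆ * (a * (a * b)) * b := by rw [c.cmove]
    _ = ⁅a, b⁆ * ((a * a) * (b * b)) := by rw [c.comm_symm b a]; group

lemma Ctx.nondeg {g : G} (hg : g ∉ Subgroup.center G) : ∃ p : G, ⁅g, p⁆ = c.z := by
  rw [Subgroup.mem_center_iff] at hg
  push_neg at hg
  obtain ⟨p, hp⟩ := hg
  refine ⟨p, (c.cd g p).resolve_left fun h => hp ?_⟩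
  rw [commutatorElement_eq_one_iff_mul_comm] at h
  rw [h]

open scoped Classical

/-- The transvection automorphism attached to an element `a` with `a * a = z`. -/
noncomputable def Ctx.transvect (a : G) (ha : a * a = c.z) : G ≃* G where
  toFun x := if ⁅x, a⁆ = 1 then x else x * a
  invFun x := if ⁅x, a⁆ = 1 then x else x * a⁻¹
  left_inv x := by
    by_cases h : ⁅x, a⁆ = 1
    · simp [h]
    · have h2 : ⁅x * a, a⁆ = ⁅x, a⁆ := by
        rw [c.comm_mul_left, c.comm_self, mul_one]
      simp only [if_neg h, h2, mul_assoc, mul_inv_cancel, mul_one]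
  right_inv x := by
    by_cases h : ⁅x, a⁆ = 1
    · simp [h]
    · have h2 : ⁅x * a⁻¹, a⁆ = ⁅x, a⁆ := by
        rw [c.comm_mul_left, c.comm_inv_left, c.comm_self, mul_one]
      simp only [if_neg h, h2, mul_assoc, inv_mul_cancel, mul_one]
  map_mul' x y := by
    have hxy : ⁅x * y, a⁆ = ⁅x, a⁆ * ⁅y, a⁆ := c.comm_mul_left x y a
    by_cases hx : ⁅x, a⁆ = 1 <;> by_cases hy : ⁅y, a⁆ = 1
    · simp [hxy, hx, hy]
    · simp [hxy, hx, hy, mul_assoc]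
    · have hya : a * y = y * a := by
        have := commutatorElement_eq_one_iff_mul_comm.mp hy
        exact this.symm
      simp [hxy, hx, hy, hya, mul_assoc]
    · have hx' : ⁅x, a⁆ = c.z := (c.cd x a).resolve_left hx
      have hy' : ⁅y, a⁆ = c.z := (c.cd y a).resolve_left hy
      have h1 : ⁅x * y, a⁆ = 1 := by rw [hxy, hx', hy', c.hzz]
      have hay : a * y = ⁅a, y⁆ * (y * a) := c.swap a y
      have hay' : ⁅a, y⁆ = c.z := by rw [c.comm_symm]; exact hy'
      have key : x * a * (y * a) = x * y := by
        calc x * a * (y * a) = x * (a * y) * a := by group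
          _ = x * (c.z * (y * a)) * a := by rw [hay, hay']
          _ = c.z * (x * (y * a)) * a := by rw [c.zmove]
          _ = c.z * (x * (y * (a * a))) := by group
          _ = c.z * (x * (y * c.z)) := by rw [ha]
          _ = c.z * (x * (c.z * y)) := by rw [c.zcomm y]
          _ = c.z * (c.z * (x * y)) := by rw [c.zmove]
          _ = x * y := by rw [← mul_assoc, c.hzz, one_mul]
      rw [if_pos h1, if_neg hx, if_neg hy, key]

lemma Ctx.transvect_apply (a : G) (ha : a * a = c.z) (x : G) :
    c.transvect a ha x = if ⁅x, a⁆ = 1 then x else x * a := rfl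

lemma Ctx.auto_of_anticomm {g h : G} (hgh : ⁅g, h⁆ = c.z) (hsq : g * g = h * h) :
    ∃ φ : G ≃* G, φ g = h := by
  have ha : (g⁻¹ * h) * (g⁻¹ * h) = c.z := by
    rw [c.sq_mul, c.comm_inv_left, hgh, ← hsq]
    group
  refine ⟨c.transvect (g⁻¹ * h) ha, ?_⟩
  have hc : ⁅g, g⁻¹ * h⁆ = c.z := by
    rw [c.comm_mul_right, c.comm_inv_right, c.comm_self, one_mul, hgh]
  rw [c.transvect_apply, if_neg (by rw [hc]; exact c.hz1), ← mul_assoc]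
  group

lemma Ctx.auto_mul_z {g : G} (hg : g ∉ Subgroup.center G) :
    ∃ φ : G ≃* G, φ g = g * c.z := by
  obtain ⟨p, hp⟩ := c.nondeg hg
  refine ⟨(MulAut.conj p⁻¹ : G ≃* G), ?_⟩
  have : (MulAut.conj p⁻¹ : G ≃* G) g = p⁻¹ * g * p⁻¹⁻¹ := rfl
  rw [this, inv_inv]
  have hgp : g * p = ⁅g, p⁆ * (p * g) := c.swap g p
  rw [hp] at hgp
  calc p⁻¹ * g * p = p⁻¹ * (g * p) := by rw [mul_assoc]
    _ = p⁻¹ * (c.z * (p * g)) := by rw [hgp]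
    _ = c.z * (p⁻¹ * (p * g)) := by rw [c.zmove]
    _ = g * c.z := by rw [← c.zcomm]; group

omit c in
/-- Exponent: `true` iff `x` does not commute with `a`. -/
noncomputable def EA (a x : G) : Bool := if ⁅x, a⁆ = 1 then false else true

/-- Siegel word `a^i * b^j * z^(i*j)`. -/
def sg (a b z : G) (i j : Bool) : G :=
  (bif i then a else 1) * (bif j then b else 1) * (bif i && j then z else 1)

lemma Ctx.ea_spec (a x : G) : ⁅x, a⁆ = bif EA a x then c.z else 1 := by
  by_cases h : ⁅x, a⁆ = 1
  · simp [EA, h]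
  · simp [EA, h, (c.cd x a).resolve_left h, c.hz1]

lemma Ctx.bifz_inj {u v : Bool} (h : (bif u then c.z else 1) = (bif v then c.z else 1)) :
    u = v := by
  cases u <;> cases v <;> first
    | rfl
    | exact absurd h.symm c.hz1
    | exact absurd h c.hz1

lemma Ctx.bifz_mul (u v : Bool) :
    (bif u then c.z else 1) * (bif v then c.z else 1) = bif xor u v then c.z else 1 := by
  cases u <;> cases v <;> simp [c.hzz]

lemma Ctx.bifz_move (u : Bool) (x w : G) :
    x * ((bif u then c.z else 1) * w) = (bif u then c.z else 1) * (x * w) := by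
  cases u
  · simp
  · exact c.zmove x w

lemma Ctx.ea_mul (a x y : G) : EA a (x * y) = xor (EA a x) (EA a y) := by
  apply c.bifz_inj
  rw [← c.ea_spec, ← c.bifz_mul, ← c.ea_spec, ← c.ea_spec]
  exact c.comm_mul_left x y a

lemma Ctx.exists_siegel (a b : G) (ha : a * a = 1) (hb : b * b = 1) (hab : ⁅a, b⁆ = 1) :
    ∃ φ : G ≃* G, ∀ x, ⁅x, a⁆ = 1 → ⁅x, b⁆ ≠ 1 → φ x = x * a := by
  have hba : b * a = a * b := (commutatorElement_eq_one_iff_mul_comm.mp hab).symm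
  have haa : ∀ w : G, a * (a * w) = w := fun w => by rw [← mul_assoc, ha, one_mul]
  have hbb : ∀ w : G, b * (b * w) = w := fun w => by rw [← mul_assoc, hb, one_mul]
  have hzz2 : ∀ w : G, c.z * (c.z * w) = w := fun w => by rw [← mul_assoc, c.hzz, one_mul]
  have hba' : ∀ w : G, b * (a * w) = a * (b * w) := fun w => by
    rw [← mul_assoc, hba, mul_assoc]
  have hza : c.z * a = a * c.z := (c.zcomm a).symm
  have hza' : ∀ w : G, c.z * (a * w) = a * (c.z * w) := fun w => by
    rw [← mul_assoc, hza, mul_assoc]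
  have hzb : c.z * b = b * c.z := (c.zcomm b).symm
  have hzb' : ∀ w : G, c.z * (b * w) = b * (c.z * w) := fun w => by
    rw [← mul_assoc, hzb, mul_assoc]
  have hScomb : ∀ i j i' j' : Bool, sg a b c.z (xor i i') (xor j j') =
      (bif xor (i && j') (j && i') then c.z else 1) * (sg a b c.z i j * sg a b c.z i' j') := by
    intro i j i' j'
    cases i <;> cases j <;> cases i' <;> cases j' <;>
      simp only [sg, Bool.xor_false, Bool.xor_true, Bool.false_xor, Bool.true_xor,
        Bool.and_false, Bool.false_and, Bool.and_true, Bool.true_and, Bool.not_true,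
        Bool.not_false, cond_true, cond_false, one_mul, mul_one, mul_assoc] <;>
      simp only [haa, hbb, hzz2, hba, hba', hza, hza', hzb, hzb', ha, hb, c.hzz,
        one_mul, mul_one]
  have hSsq : ∀ i j : Bool, sg a b c.z i j * sg a b c.z i j = 1 := by
    intro i j
    have h2 := hScomb i j i j
    rw [Bool.and_comm j i, Bool.xor_self, Bool.xor_self, Bool.xor_self] at h2
    simpa [sg] using h2.symm
  -- commutators of sg with anything
  have c1y : ∀ y : G, ⁅(1 : G), y⁆ = 1 := fun y => by
    rw [commutatorElement_def]; group
  have czy : ∀ y : G, ⁅c.z, y⁆ = 1 := fun y =>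
    commutatorElement_eq_one_iff_mul_comm.mpr (c.zcomm y).symm
  have cSy : ∀ (i j : Bool) (y : G), ⁅sg a b c.z i j, y⁆ =
      bif xor (i && EA a y) (j && EA b y) then c.z else 1 := by
    intro i j y
    have hay : ⁅a, y⁆ = bif EA a y then c.z else 1 := by
      rw [c.comm_symm]; exact c.ea_spec a y
    have hby : ⁅b, y⁆ = bif EA b y then c.z else 1 := by
      rw [c.comm_symm]; exact c.ea_spec b y
    cases i <;> cases j <;>
      simp only [sg, Bool.and_false, Bool.false_and, Bool.and_true, Bool.true_and,
        cond_true, cond_false, one_mul, mul_one, c.comm_mul_left, c1y, czy, hay, hby,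
        Bool.xor_false, Bool.false_xor, c.bifz_mul]
  -- invariance of exponents
  have eaS : ∀ (t : G) (ht : ⁅a, t⁆ = 1 ∧ ⁅b, t⁆ = 1) (i j : Bool) (x : G),
      EA t (x * sg a b c.z i j) = EA t x := by
    intro t ht i j x
    apply c.bifz_inj
    rw [← c.ea_spec, ← c.ea_spec, c.comm_mul_left]
    have : ⁅sg a b c.z i j, t⁆ = 1 := by
      cases i <;> cases j <;>
        simp only [sg, cond_true, cond_false, one_mul, mul_one, c.comm_mul_left,
          c1y, czy, ht.1, ht.2, Bool.and_self, Bool.and_false, Bool.false_and,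
          Bool.and_true, Bool.true_and]
    rw [this, mul_one]
  have hta : ⁅a, a⁆ = 1 ∧ ⁅b, a⁆ = 1 := ⟨c.comm_self a, by rw [← c.comm_symm a b]; exact hab⟩
  have htb : ⁅a, b⁆ = 1 ∧ ⁅b, b⁆ = 1 := ⟨hab, c.comm_self b⟩
  refine ⟨{ toFun := fun x => x * sg a b c.z (EA b x) (EA a x),
            invFun := fun x => x * sg a b c.z (EA b x) (EA a x),
            left_inv := ?_, right_inv := ?_, map_mul' := ?_ }, ?_⟩
  case refine_1 =>
    intro x
    dsimp only
    rw [eaS a hta, eaS b htb, mul_assoc, hSsq, mul_one]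
  case refine_2 =>
    intro x
    dsimp only
    rw [eaS a hta, eaS b htb, mul_assoc, hSsq, mul_one]
  case refine_3 =>
    intro x y
    rw [c.ea_mul a x y, c.ea_mul b x y, hScomb]
    calc x * y * ((bif xor (EA b x && EA a y) (EA a x && EA b y) then c.z else 1) *
            (sg a b c.z (EA b x) (EA a x) * sg a b c.z (EA b y) (EA a y)))
        = (bif xor (EA b x && EA a y) (EA a x && EA b y) then c.z else 1) *
            (x * y * (sg a b c.z (EA b x) (EA a x) * sg a b c.z (EA b y) (EA a y))) :=
          c.bifz_move _ _ _
      _ = (bif xor (EA b x && EA a y) (EA a x && EA b y) then c.z else 1) *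
            (x * (y * sg a b c.z (EA b x) (EA a x) * sg a b c.z (EA b y) (EA a y))) := by
          group
      _ = x * ((bif xor (EA b x && EA a y) (EA a x && EA b y) then c.z else 1) *
            (y * sg a b c.z (EA b x) (EA a x) * sg a b c.z (EA b y) (EA a y))) :=
          (c.bifz_move _ _ _).symm
      _ = x * ((bif xor (EA b x && EA a y) (EA a x && EA b y) then c.z else 1) *
            (y * sg a b c.z (EA b x) (EA a x)) * sg a b c.z (EA b y) (EA a y)) := by
          group
      _ = x * (⁅sg a b c.z (EA b x) (EA a x), y⁆ *
            (y * sg a b c.z (EA b x) (EA a x)) * sg a b c.z (EA b y) (EA a y)) := by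
          rw [cSy]
      _ = x * (sg a b c.z (EA b x) (EA a x) * y * sg a b c.z (EA b y) (EA a y)) := by
          rw [c.swap (sg a b c.z (EA b x) (EA a x)) y]
      _ = x * sg a b c.z (EA b x) (EA a x) * (y * sg a b c.z (EA b y) (EA a y)) := by
          group
  case refine_4 =>
    intro x hxa hxb
    have h1 : EA a x = false := by simp [EA, hxa]
    have h2 : EA b x = true := by simp [EA, hxb]
    show x * sg a b c.z (EA b x) (EA a x) = x * a
    rw [h1, h2]
    simp [sg]

lemma Ctx.lemmaA {g h : G} (hg : g ∉ Subgroup.center G) (hh : h ∉ Subgroup.center G)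
    (hgh : ⁅h, g⁆ = 1) :
    ∃ u : G, ⁅g, u⁆ = c.z ∧ ⁅h, u⁆ = c.z ∧ (u * u = 1 ∨ u * u = g * g) := by
  -- first find a common "anticommuting partner" u₀
  obtain ⟨p, hp⟩ := c.nondeg hg
  obtain ⟨r, hr⟩ := c.nondeg hh
  have step1 : ∃ u₀ : G, ⁅g, u₀⁆ = c.z ∧ ⁅h, u₀⁆ = c.z := by
    rcases c.cd h p with h1 | h1
    · rcases c.cd g r with h2 | h2
      · exact ⟨p * r, by rw [c.comm_mul_right, hp, h2, mul_one],
          by rw [c.comm_mul_right, h1, hr, one_mul]⟩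
      · exact ⟨r, h2, hr⟩
    · exact ⟨p, hp, h1⟩
  obtain ⟨u₀, hgu, hhu⟩ := step1
  rcases c.sq_vals u₀ with hu | hu
  · exact ⟨u₀, hgu, hhu, Or.inl hu⟩
  · rcases c.sq_vals g with hgg | hgg
    · -- u₀ * u₀ = z but g * g = 1 : replace u₀ by u₀ * g
      refine ⟨u₀ * g, ?_, ?_, Or.inl ?_⟩
      · rw [c.comm_mul_right, hgu, c.comm_self, mul_one]
      · rw [c.comm_mul_right, hhu, hgh, mul_one]
      · rw [c.sq_mul, hu, hgg, mul_one, c.comm_symm, hgu, c.hzz]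
    · exact ⟨u₀, hgu, hhu, Or.inr (by rw [hu, hgg])⟩

lemma Ctx.main_noncentral {g h : G} (hg : g ∉ Subgroup.center G)
    (hh : h ∉ Subgroup.center G) (hsq : g * g = h * h) : ∃ φ : G ≃* G, φ g = h := by
  rcases c.cd g h with hgh | hgh
  · -- commuting case
    have hgh' : ⁅h, g⁆ = 1 := by rw [← c.comm_symm]; exact hgh
    obtain ⟨u, hgu, hhu, hsqu⟩ := c.lemmaA hg hh hgh'
    rcases hsqu with hu | hu
    · -- Siegel transformation sending g to h
      have hgi : ⁅g⁻¹, h⁆ = 1 := by rw [c.comm_inv_left]; exact hgh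
      have ha : (g⁻¹ * h) * (g⁻¹ * h) = 1 := by
        rw [c.sq_mul, hgi, one_mul, ← hsq]
        group
      have hab : ⁅g⁻¹ * h, u⁆ = 1 := by
        rw [c.comm_mul_left, c.comm_inv_left, hgu, hhu, c.hzz]
      obtain ⟨φ, hφ⟩ := c.exists_siegel (g⁻¹ * h) u ha hu hab
      refine ⟨φ, ?_⟩
      have h1 : ⁅g, g⁻¹ * h⁆ = 1 := by
        rw [c.comm_mul_right, c.comm_inv_right, c.comm_self, one_mul, hgh]
      have h2 : ⁅g, u⁆ ≠ 1 := by rw [hgu]; exact c.hz1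
      rw [hφ g h1 h2, mul_inv_cancel_left]
    · -- two transvections, via u
      obtain ⟨φ₁, hφ₁⟩ := c.auto_of_anticomm hgu hu.symm
      obtain ⟨φ₂, hφ₂⟩ := c.auto_of_anticomm (by rw [← c.comm_symm]; exact hhu : ⁅u, h⁆ = c.z)
        (hu.trans hsq)
      exact ⟨φ₁.trans φ₂, by rw [MulEquiv.trans_apply, hφ₁, hφ₂]⟩
  · exact c.auto_of_anticomm hgh hsq

omit c in
lemma center_map (φ : G ≃* G) {g : G} (hg : g ∈ Subgroup.center G) :
    φ g ∈ Subgroup.center G := by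
  rw [Subgroup.mem_center_iff]
  intro y
  have := Subgroup.mem_center_iff.mp hg (φ.symm y)
  calc y * φ g = φ (φ.symm y) * φ g := by rw [MulEquiv.apply_symm_apply]
    _ = φ (φ.symm y * g) := by rw [map_mul]
    _ = φ (g * φ.symm y) := by rw [this]
    _ = φ g * y := by rw [map_mul, MulEquiv.apply_symm_apply]

end ExtraspecialAux

open ExtraspecialAux in
/-- In an extraspecial 2-group, two elements are automorphic iff they have the same
order and are simultaneously central or noncentral. -/
theorem extraspecial_two_group_automorphic_iff (G : Type*) [Group G] [Finite G]
    (hG : IsExtraspecial 2 G) (g h : G) :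
    (∃ φ : G ≃* G, φ g = h) ↔
      (orderOf g = orderOf h ∧ (g ∈ Subgroup.center G ↔ h ∈ Subgroup.center G)) := by
  constructor
  · rintro ⟨φ, rfl⟩
    refine ⟨(φ.orderOf_eq g).symm, ⟨fun hg => center_map φ hg, fun hg => ?_⟩⟩
    have := center_map φ.symm hg
    rwa [MulEquiv.symm_apply_apply] at this
  · rintro ⟨hord, hcent⟩
    -- build the context
    obtain ⟨hp, hcom, hfr, hcard⟩ := hG
    obtain ⟨z₀, hz₀ne, hz₀uniq⟩ := (Nat.card_eq_two_iff' (1 : Subgroup.center G)).mp hcard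
    set z : G := (z₀ : G) with hzdef
    have hz1 : z ≠ 1 := by
      intro hcontra
      exact hz₀ne (by rwa [← OneMemClass.coe_eq_one])
    have hmem : ∀ w ∈ Subgroup.center G, w = 1 ∨ w = z := by
      intro w hw
      by_cases h1 : (⟨w, hw⟩ : Subgroup.center G) = 1
      · left; exact congrArg Subtype.val h1
      · right; exact congrArg Subtype.val (hz₀uniq ⟨w, hw⟩ h1)
    have hzc : z ∈ Subgroup.center G := z₀.2
    have hzz : z * z = 1 := by
      rcases hmem (z * z) (mul_mem hzc hzc) with h1 | h1
      · exact h1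
      · exact absurd (mul_right_cancel (h1.trans (one_mul z).symm) : z = 1) hz1
    have hcen : ∀ a b : G, ⁅a, b⁆ ∈ Subgroup.center G := by
      intro a b
      rw [hcom, commutator_def]
      exact Subgroup.commutator_mem_commutator (Subgroup.mem_top a) (Subgroup.mem_top b)
    set c : Ctx G := ⟨z, hzc, hz1, hzz, hmem, hcen⟩ with hcdef
    by_cases hgZ : g ∈ Subgroup.center G
    · -- central case: same order forces g = h
      have hhZ : h ∈ Subgroup.center G := hcent.mp hgZ
      have : g = h := by
        rcases hmem g hgZ with h1 | h1 <;> rcases hmem h hhZ with h2 | h2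
        · rw [h1, h2]
        · exfalso
          rw [h1, h2, orderOf_one] at hord
          exact hz1 (orderOf_eq_one_iff.mp hord.symm)
        · exfalso
          rw [h1, h2, orderOf_one] at hord
          exact hz1 (orderOf_eq_one_iff.mp hord)
        · rw [h1, h2]
      exact ⟨MulEquiv.refl G, this⟩
    · have hhZ : h ∉ Subgroup.center G := fun hh => hgZ (hcent.mpr hh)
      have hiff : g * g = 1 ↔ h * h = 1 := by
        rw [← pow_two, ← pow_two, ← orderOf_dvd_iff_pow_eq_one,
          ← orderOf_dvd_iff_pow_eq_one, hord]
      have hsq : g * g = h * h := by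
        rcases c.sq_vals g with h1 | h1 <;> rcases c.sq_vals h with h2 | h2
        · rw [h1, h2]
        · exact absurd (h2.symm.trans (hiff.mp h1)) hz1
        · exact absurd (h1.symm.trans (hiff.mpr h2)) hz1
        · rw [h1, h2]
      exact c.main_noncentral hgZ hhZ hsq
end

section
/- Let p be an odd prime and G an extraspecial p-group of exponent p. Then two elements g, h ∈ G are automorphic (there exists an automorphism of G mapping g to h) if and only if g and h have the same order and (g ∈ Z(G) if and only if h ∈ Z(G)). -/
open scoped commutatorElement

namespace ExtraAux

variable {p : ℕ} {G : Type*} [Group G]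

/-- power with `ZMod p` exponent -/
def pw (x : G) (k : ZMod p) : G := x ^ k.val

lemma pow_eq_pw [NeZero p] {x : G} (hx : x ^ p = 1) (m : ℕ) :
    x ^ m = pw x (m : ZMod p) := by
  have hd : orderOf x ∣ p := orderOf_dvd_of_pow_eq_one hx
  rw [pw, ZMod.val_natCast]
  exact pow_eq_pow_iff_modEq.mpr (((Nat.mod_modEq m p).of_dvd hd).symm)

lemma zpow_eq_pw [NeZero p] {x : G} (hx : x ^ p = 1) (n : ℤ) :
    x ^ n = pw x (n : ZMod p) := by
  have h1 : x ^ n = x ^ ((n % (p:ℤ)).toNat) := by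
    conv_lhs => rw [show n = (p:ℤ) * (n / p) + n % p from (Int.mul_ediv_add_emod n p).symm]
    rw [zpow_add, zpow_mul]
    have : (x : G) ^ (p : ℤ) = 1 := by rw [zpow_natCast, hx]
    rw [this, one_zpow, one_mul,
      ← zpow_natCast, Int.toNat_of_nonneg (Int.emod_nonneg n (by exact_mod_cast (NeZero.ne p)))]
  rw [h1, pow_eq_pw hx]
  congr 1
  have : ((n % (p:ℤ)).toNat : ℤ) = n % p :=
    Int.toNat_of_nonneg (Int.emod_nonneg n (by exact_mod_cast (NeZero.ne p)))
  have h2 := congrArg (fun z : ℤ => (z : ZMod p)) this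
  simp only [Int.cast_natCast] at h2
  rw [h2]
  simp

lemma pw_add [NeZero p] {x : G} (hx : x ^ p = 1) (a b : ZMod p) :
    pw x (a + b) = pw x a * pw x b := by
  have : pw x a * pw x b = x ^ (a.val + b.val) := by rw [pw, pw, pow_add]
  rw [this, pow_eq_pw hx]
  congr 1
  push_cast
  simp [ZMod.natCast_val, ZMod.cast_id]

@[simp] lemma pw_zero (x : G) : pw x (0 : ZMod p) = 1 := by simp [pw]

lemma pw_one_exp [NeZero p] (hp : 1 < p) (x : G) : pw x (1 : ZMod p) = x := by
  rw [pw, ZMod.val_one_eq_one_mod, Nat.mod_eq_of_lt hp, pow_one]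

lemma pw_pow_val [NeZero p] {x : G} (hx : x ^ p = 1) (a b : ZMod p) :
    (pw x a) ^ b.val = pw x (a * b) := by
  rw [pw, ← pow_mul, pow_eq_pw hx]
  congr 1
  push_cast
  simp [ZMod.natCast_val, ZMod.cast_id]

lemma pw_inj [NeZero p] {x : G} (hx : orderOf x = p) {a b : ZMod p} (h : pw x a = pw x b) :
    a = b := by
  rw [pw, pw, pow_eq_pow_iff_modEq, hx, Nat.ModEq] at h
  rw [Nat.mod_eq_of_lt (ZMod.val_lt a), Nat.mod_eq_of_lt (ZMod.val_lt b)] at h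
  exact ZMod.val_injective p h

lemma pw_eq_one_iff [NeZero p] {x : G} (hx : orderOf x = p) {a : ZMod p} :
    pw x a = 1 ↔ a = 0 := by
  constructor
  · intro h; exact pw_inj hx (by simpa using h)
  · rintro rfl; simp

lemma pw_mem_zpowers (x : G) (a : ZMod p) : pw x a ∈ Subgroup.zpowers x :=
  Subgroup.pow_mem _ (Subgroup.mem_zpowers x) _

lemma mem_zpowers_iff_pw [NeZero p] {x : G} (hx : x ^ p = 1) {y : G} :
    y ∈ Subgroup.zpowers x ↔ ∃ k : ZMod p, y = pw x k := by
  constructor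
  · rintro h
    obtain ⟨n, rfl⟩ := Subgroup.mem_zpowers_iff.mp h
    exact ⟨(n : ZMod p), (zpow_eq_pw hx n)⟩
  · rintro ⟨k, rfl⟩; exact pw_mem_zpowers x k


section Comm

variable (hcen : ∀ x y : G, ⁅x, y⁆ ∈ Subgroup.center G)

lemma comm_swap (x y : G) : ⁅y, x⁆ = ⁅x, y⁆⁻¹ := by
  rw [commutatorElement_inv]

lemma mul_eq_comm_mul (x y : G) : x * y = ⁅x, y⁆ * (y * x) := by
  group

include hcen in
lemma comm_mul_left (x y z : G) : ⁅x * y, z⁆ = ⁅x, z⁆ * ⁅y, z⁆ := by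
  have h : ⁅x * y, z⁆ = x * ⁅y, z⁆ * x⁻¹ * ⁅x, z⁆ := by group
  have hc := (Subgroup.mem_center_iff.mp (hcen y z)) x⁻¹
  rw [h]
  rw [show x * ⁅y, z⁆ * x⁻¹ = x * (⁅y, z⁆ * x⁻¹) from by group, ← hc,
    show x * (x⁻¹ * ⁅y, z⁆) = ⁅y, z⁆ from by group]
  exact (Subgroup.mem_center_iff.mp (hcen x z)) ⁅y, z⁆

include hcen in
lemma comm_mul_right (x y z : G) : ⁅x, y * z⁆ = ⁅x, y⁆ * ⁅x, z⁆ := by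
  rw [comm_swap, comm_mul_left hcen, mul_inv_rev, ← comm_swap, ← comm_swap]
  have := (Subgroup.mem_center_iff.mp (hcen x y)) ⁅x, z⁆
  rw [this]

include hcen in
lemma comm_pow_left (x z : G) (n : ℕ) : ⁅x ^ n, z⁆ = ⁅x, z⁆ ^ n := by
  induction n with
  | zero => rw [pow_zero, pow_zero, commutatorElement_one_left]
  | succ k ih => rw [pow_succ, comm_mul_left hcen, ih, pow_succ]

include hcen in
lemma comm_pow_right (x z : G) (n : ℕ) : ⁅x, z ^ n⁆ = ⁅x, z⁆ ^ n := by
  rw [comm_swap, comm_pow_left hcen, ← inv_pow, ← comm_swap]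

include hcen in
lemma comm_inv_left (x z : G) : ⁅x⁻¹, z⁆ = ⁅x, z⁆⁻¹ := by
  have h := comm_mul_left hcen x⁻¹ x z
  rw [inv_mul_cancel, show ⁅(1:G), z⁆ = 1 from by group] at h
  exact (eq_inv_of_mul_eq_one_left h.symm)

include hcen in
lemma comm_inv_right (x z : G) : ⁅x, z⁻¹⁆ = ⁅x, z⁆⁻¹ := by
  rw [comm_swap, comm_inv_left hcen, ← comm_swap]

lemma comm_central_one (x z : G) (hx : x ∈ Subgroup.center G) : ⁅x, z⁆ = 1 := by
  rw [commutatorElement_def,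
    show x * z = z * x from (Subgroup.mem_center_iff.mp hx z).symm]
  group

lemma comm_central_one' (x z : G) (hz : z ∈ Subgroup.center G) : ⁅x, z⁆ = 1 := by
  rw [comm_swap, comm_central_one z x hz, inv_one]

end Comm

/-- Context: a group of exponent dividing `p` whose commutators lie in the
cyclic central subgroup generated by `γ ≠ 1`. -/
structure Ctx (p : ℕ) (G : Type*) [Group G] : Type _ where
  gam : G
  hcen : gam ∈ Subgroup.center G
  hord : ∀ x : G, x ^ p = 1
  hcomm : ∀ x y : G, ⁅x, y⁆ ∈ Subgroup.zpowers gam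
  hne : gam ≠ 1

namespace Ctx

variable [Fact p.Prime] (c : Ctx p G)

instance : NeZero p := ⟨(Fact.out : p.Prime).ne_zero⟩

lemma ordgam : orderOf c.gam = p := orderOf_eq_prime (c.hord c.gam) c.hne

lemma comm_cen (c : Ctx p G) : ∀ x y : G, ⁅x, y⁆ ∈ Subgroup.center G := fun x y =>
  Subgroup.zpowers_le.mpr c.hcen (c.hcomm x y)

noncomputable def B (x y : G) : ZMod p :=
  ((mem_zpowers_iff_pw (c.hord c.gam)).mp (c.hcomm x y)).choose

lemma B_spec (x y : G) : ⁅x, y⁆ = pw c.gam (c.B x y) :=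
  ((mem_zpowers_iff_pw (c.hord c.gam)).mp (c.hcomm x y)).choose_spec

lemma B_eq {x y : G} {k : ZMod p} (h : ⁅x, y⁆ = pw c.gam k) : c.B x y = k :=
  pw_inj c.ordgam ((c.B_spec x y).symm.trans h)

lemma B_mul_left (x y z : G) : c.B (x * y) z = c.B x z + c.B y z :=
  c.B_eq (by rw [comm_mul_left c.comm_cen, c.B_spec x z, c.B_spec y z,
    pw_add (c.hord c.gam)])

lemma B_mul_right (x y z : G) : c.B x (y * z) = c.B x y + c.B x z :=
  c.B_eq (by rw [comm_mul_right c.comm_cen, c.B_spec x y, c.B_spec x z,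
    pw_add (c.hord c.gam)])

lemma B_swap (x y : G) : c.B y x = -c.B x y := by
  apply c.B_eq
  rw [comm_swap, c.B_spec x y, pw, ← zpow_natCast, ← zpow_neg,
    zpow_eq_pw (c.hord c.gam)]
  congr 1
  push_cast
  simp [ZMod.natCast_val, ZMod.cast_id]

lemma B_self (x : G) : c.B x x = 0 := c.B_eq (by rw [show ⁅x, x⁆ = 1 from by group]; simp)

lemma B_one_left (x : G) : c.B 1 x = 0 := c.B_eq (by rw [show ⁅(1:G), x⁆ = 1 from by group]; simp)

lemma B_central_left {x : G} (hx : x ∈ Subgroup.center G) (y : G) : c.B x y = 0 :=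
  c.B_eq (by rw [comm_central_one x y hx]; simp)

lemma B_central_right {y : G} (hy : y ∈ Subgroup.center G) (x : G) : c.B x y = 0 :=
  c.B_eq (by rw [comm_central_one' x y hy]; simp)

lemma B_inv_left (x z : G) : c.B x⁻¹ z = -c.B x z := by
  have := c.B_mul_left x⁻¹ x z
  rw [inv_mul_cancel, c.B_one_left] at this
  linear_combination -this

lemma B_pw_left (x z : G) (k : ZMod p) : c.B (pw x k) z = k * c.B x z := by
  apply c.B_eq
  rw [pw, comm_pow_left c.comm_cen, c.B_spec x z, pw_pow_val (c.hord c.gam)]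
  ring_nf

lemma B_pw_right (x z : G) (k : ZMod p) : c.B x (pw z k) = k * c.B x z := by
  rw [B_swap, B_pw_left, B_swap]
  ring

lemma comm_eq_pw (x y : G) : x * y = pw c.gam (c.B x y) * (y * x) := by
  rw [← c.B_spec, ← mul_eq_comm_mul]

lemma mem_center_iff_B {x : G} : x ∈ Subgroup.center G ↔ ∀ y, c.B y x = 0 := by
  constructor
  · intro hx y; exact c.B_central_right hx y
  · intro h
    rw [Subgroup.mem_center_iff]
    intro g
    have h1 : ⁅g, x⁆ = 1 := by rw [c.B_spec g x, h g]; simp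
    have := commutatorElement_eq_one_iff_mul_comm.mp h1
    exact this

lemma B_surj {u : G} (hu : u ∉ Subgroup.center G) (m : ZMod p) : ∃ x, c.B x u = m := by
  obtain ⟨x₀, hx₀⟩ : ∃ x₀, c.B x₀ u ≠ 0 := by
    by_contra hcon
    push_neg at hcon
    exact hu (c.mem_center_iff_B.mpr hcon)
  refine ⟨pw x₀ (m * (c.B x₀ u)⁻¹), ?_⟩
  rw [c.B_pw_left, mul_assoc, inv_mul_cancel₀ hx₀, mul_one]


lemma pw_merge0 {x : G} (hx : x ^ p = 1) (a b : ZMod p) (w : G) :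
    pw x a * (pw x b * w) = pw x (a + b) * w := by
  rw [← mul_assoc, ← pw_add hx]

lemma pw_merge0' {x : G} (hx : x ^ p = 1) (a b : ZMod p) :
    pw x a * pw x b = pw x (a + b) :=
  (pw_add hx a b).symm

lemma pw_gam_mem_center (k : ZMod p) : pw c.gam k ∈ Subgroup.center G :=
  Subgroup.pow_mem _ c.hcen _

lemma cg_swap (k : ZMod p) (t : G) : pw c.gam k * t = t * pw c.gam k :=
  (Subgroup.mem_center_iff.mp (c.pw_gam_mem_center k) t).symm

lemma cg_rot (k : ZMod p) (t w : G) : pw c.gam k * (t * w) = t * (pw c.gam k * w) := by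
  rw [← mul_assoc, c.cg_swap k t, mul_assoc]


lemma u_swap' (u y : G) (A : ZMod p) :
    pw u A * y = y * (pw c.gam (A * c.B u y) * pw u A) := by
  have h := c.comm_eq_pw (pw u A) y
  rw [c.B_pw_left] at h
  rw [h, c.cg_rot]

lemma u_swap (u y w : G) (A : ZMod p) :
    pw u A * (y * w) = y * (pw c.gam (A * c.B u y) * (pw u A * w)) := by
  rw [← mul_assoc, c.u_swap' u y A, mul_assoc, mul_assoc]

lemma two_ne_zero0 (hodd : Odd p) : (2 : ZMod p) ≠ 0 := by
  intro h
  have h2 : ((2 : ℕ) : ZMod p) = 0 := by exact_mod_cast h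
  have := (ZMod.natCast_eq_zero_iff 2 p).mp h2
  have hp2 : p = 2 := ((Nat.prime_dvd_prime_iff_eq (Fact.out) Nat.prime_two).mp this)
  rw [hp2] at hodd
  exact (Nat.not_odd_iff_even.mpr (even_two)) hodd

/-- Symplectic transvection lifted to the group. -/
theorem transvection [Finite G] (hodd : Odd p) (u : G) (lam : ZMod p) :
    ∃ φ : G ≃* G, ∀ x : G,
      φ x = x * (pw u (lam * c.B x u) *
        pw c.gam (-(2⁻¹) * lam * (c.B x u) ^ 2)) := by
  classical
  set μ : ZMod p := -(2⁻¹) * lam with hμ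
  set f : G → G := fun x => x * (pw u (lam * c.B x u) * pw c.gam (μ * (c.B x u) ^ 2))
    with hf
  have hmul : ∀ x y : G, f (x * y) = f x * f y := by
    intro x y
    simp only [hf]
    rw [c.B_mul_left]
    set a := c.B x u
    set b := c.B y u
    rw [show x * (pw u (lam * a) * pw c.gam (μ * a ^ 2)) *
        (y * (pw u (lam * b) * pw c.gam (μ * b ^ 2)))
        = x * (pw u (lam * a) * (pw c.gam (μ * a ^ 2) *
          (y * (pw u (lam * b) * pw c.gam (μ * b ^ 2))))) from by
      simp only [mul_assoc]]
    rw [c.cg_rot (μ * a ^ 2) y, c.cg_rot (μ * a ^ 2) (pw u (lam * b)),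
      pw_merge0' (c.hord c.gam), c.u_swap u y, pw_merge0 (c.hord u),
      c.cg_rot (lam * a * c.B u y), pw_merge0' (c.hord c.gam), ← mul_assoc]
    have h2 : (2 : ZMod p) ≠ 0 := two_ne_zero0 hodd
    have h2μ : μ * 2 = -lam := by
      rw [hμ]; field_simp
    have hb : c.B u y = -b := by rw [c.B_swap]
    rw [hb]
    have e1 : lam * (a + b) = lam * a + lam * b := by ring
    have e2 : μ * (a + b) ^ 2 = lam * a * (-b) + (μ * a ^ 2 + μ * b ^ 2) := by
      linear_combination a * b * h2μ
    rw [e1, e2]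
    simp only [mul_assoc]
  set F : G →* G := MonoidHom.mk' f hmul with hF
  have hinj : Function.Injective F := by
    rw [injective_iff_map_eq_one]
    intro x hx
    have hBx : c.B x u = 0 := by
      have h0 : c.B (f x) u = c.B x u := by
        rw [hf]
        simp only []
        rw [c.B_mul_left, c.B_mul_left, c.B_pw_left, c.B_pw_left, c.B_self,
          c.B_central_left c.hcen]
        ring
      have h1 : (F : G → G) x = f x := rfl
      rw [← h0, show f x = (1 : G) from hx, c.B_one_left]
    have : f x = x := by
      rw [hf]; simp only []; rw [hBx]
      simp
    have hfx : f x = 1 := hx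
    rw [this] at hfx
    exact hfx
  have hbij : Function.Bijective F := (Finite.injective_iff_bijective).mp hinj
  refine ⟨MulEquiv.ofBijective F hbij, ?_⟩
  intro x
  simp only [MulEquiv.ofBijective_apply]
  show f x = _
  rw [hf, hμ]

end Ctx

open Ctx in
/-- Existence of a "similitude" automorphism acting on the center by `z ↦ z ^ t`. -/
theorem scaling {p : ℕ} [Fact p.Prime] :
    ∀ (n : ℕ) (G : Type u) [Group G] [Finite G], Nat.card G ≤ n →
      (∀ x : G, x ^ p = 1) →
      ∀ γ : G, γ ∈ Subgroup.center G →
      (∀ x y : G, ⁅x, y⁆ ∈ Subgroup.zpowers γ) →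
      ∀ t : ℕ, ¬ (p ∣ t) →
      ∃ φ : G ≃* G, ∀ z ∈ Subgroup.center G, φ z = z ^ t := by
  classical
  intro n
  induction n using Nat.strong_induction_on with
  | _ n IH =>
  intro G _ _ hcard hord γ hγcen hγcomm t ht
  by_cases habel : ∀ x y : G, x * y = y * x
  · -- abelian case: use the power map
    have hmul : ∀ x y : G, (x * y) ^ t = x ^ t * y ^ t := fun x y =>
      Commute.mul_pow (habel x y) t
    set F : G →* G := MonoidHom.mk' (fun x => x ^ t) hmul with hF
    have hinj : Function.Injective F := by
      rw [injective_iff_map_eq_one]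
      intro x hx
      have h1 : orderOf x ∣ t := orderOf_dvd_of_pow_eq_one hx
      have h2 : orderOf x ∣ p := orderOf_dvd_of_pow_eq_one (hord x)
      have h3 : orderOf x ∣ Nat.gcd p t := Nat.dvd_gcd h2 h1
      have hcop : Nat.gcd p t = 1 := (Nat.Prime.coprime_iff_not_dvd Fact.out).mpr ht
      rw [hcop, Nat.dvd_one] at h3
      exact orderOf_eq_one_iff.mp h3
    exact ⟨MulEquiv.ofBijective F ((Finite.injective_iff_bijective).mp hinj),
      fun z _ => rfl⟩
  · -- nonabelian case
    push_neg at habel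
    obtain ⟨a, b, hab⟩ := habel
    have hγab : ⁅a, b⁆ ≠ 1 := fun h => hab (commutatorElement_eq_one_iff_mul_comm.mp h)
    -- replace γ by ⁅a,b⁆
    have hγ1 : γ ≠ 1 := by
      rintro rfl
      rw [Subgroup.zpowers_one_eq_bot] at hγcomm
      exact hγab (Subgroup.mem_bot.mp (hγcomm a b))
    have hordγ : orderOf γ = p := orderOf_eq_prime (hord γ) hγ1
    set γ₀ : G := ⁅a, b⁆ with hγ₀
    have hγ₀mem : γ₀ ∈ Subgroup.zpowers γ := hγcomm a b
    have hordγ₀ : orderOf γ₀ = p := orderOf_eq_prime (hord γ₀) hγab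
    have hzp : Subgroup.zpowers γ₀ = Subgroup.zpowers γ := by
      apply Subgroup.eq_of_le_of_card_ge (Subgroup.zpowers_le.mpr hγ₀mem)
      rw [Nat.card_zpowers, Nat.card_zpowers, hordγ, hordγ₀]
    have hγ₀cen : γ₀ ∈ Subgroup.center G :=
      Subgroup.zpowers_le.mpr hγcen hγ₀mem
    set c : Ctx p G := ⟨γ₀, hγ₀cen, hord, fun x y => hzp ▸ hγcomm x y, hγab⟩ with hc
    have hcgam : c.gam = γ₀ := rfl
    have hp1 : 1 < p := (Fact.out : p.Prime).one_lt
    have hBab : c.B a b = 1 := by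
      apply c.B_eq
      rw [pw_one_exp hp1]
    have hBba : c.B b a = -1 := by rw [c.B_swap, hBab]
    -- the centralizer
    set D : Subgroup G := Subgroup.centralizer {a, b} with hD
    have hmemD : ∀ {d : G}, d ∈ D ↔ (a * d = d * a ∧ b * d = d * b) := by
      intro d
      rw [hD, Subgroup.mem_centralizer_iff]
      constructor
      · intro hh; exact ⟨hh a (by simp), hh b (by simp)⟩
      · rintro ⟨h1, h2⟩ g hg
        rcases hg with rfl | rfl
        · exact h1
        · exact h2
    have hDa : ∀ {d : G}, d ∈ D → Commute d a := fun hd => ((hmemD.mp hd).1).symm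
    have hDb : ∀ {d : G}, d ∈ D → Commute d b := fun hd => ((hmemD.mp hd).2).symm
    have hBDa : ∀ {d : G}, d ∈ D → c.B d a = 0 := by
      intro d hd
      apply c.B_eq
      rw [commutatorElement_eq_one_iff_mul_comm.mpr (hDa hd), pw_zero]
    have hBDb : ∀ {d : G}, d ∈ D → c.B d b = 0 := by
      intro d hd
      apply c.B_eq
      rw [commutatorElement_eq_one_iff_mul_comm.mpr (hDb hd), pw_zero]
    have hmemD' : ∀ {d : G}, c.B d a = 0 → c.B d b = 0 → d ∈ D := by
      intro d h1 h2
      rw [hmemD]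
      constructor
      · have : ⁅d, a⁆ = 1 := by rw [c.B_spec d a, h1, pw_zero]
        exact (commutatorElement_eq_one_iff_mul_comm.mp this).symm
      · have : ⁅d, b⁆ = 1 := by rw [c.B_spec d b, h2, pw_zero]
        exact (commutatorElement_eq_one_iff_mul_comm.mp this).symm
    -- coordinates
    set iC : G → ZMod p := fun x => c.B x b with hiC
    set jC : G → ZMod p := fun x => -(c.B x a) with hjC
    set yC : G → G := fun x => (pw b (jC x))⁻¹ * ((pw a (iC x))⁻¹ * x) with hyC
    have hyD : ∀ x : G, yC x ∈ D := by
      intro x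
      apply hmemD'
      · rw [hyC]
        simp only []
        rw [c.B_mul_left, c.B_mul_left, c.B_inv_left, c.B_inv_left,
          c.B_pw_left, c.B_pw_left, hBba, c.B_self, hjC, hiC]
        ring
      · rw [hyC]
        simp only []
        rw [c.B_mul_left, c.B_mul_left, c.B_inv_left, c.B_inv_left,
          c.B_pw_left, c.B_pw_left, hBab, c.B_self, hjC, hiC]
        ring
    have hdecomp : ∀ x : G, x = pw a (iC x) * (pw b (jC x) * yC x) := by
      intro x
      rw [hyC]
      simp only []
      rw [mul_inv_cancel_left, mul_inv_cancel_left]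
    -- additivity of coordinates
    have hiadd : ∀ x x' : G, iC (x * x') = iC x + iC x' := by
      intro x x'; rw [hiC]; simp only []; rw [c.B_mul_left]
    have hjadd : ∀ x x' : G, jC (x * x') = jC x + jC x' := by
      intro x x'; rw [hjC]; simp only []; rw [c.B_mul_left]; ring
    -- the cocycle identity for yC
    have hprod : ∀ x x' : G, x * x' =
        pw a (iC x + iC x') * (pw b (jC x + jC x') *
          (pw c.gam (jC x * -(iC x')) * (yC x * yC x'))) := by
      intro x x'
      conv_lhs => rw [hdecomp x, hdecomp x']
      have hswap3 : ∀ {g h : G}, Commute g h → ∀ w : G, g * (h * w) = h * (g * w) := by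
        intro g h hgh w
        rw [← mul_assoc, hgh.eq, mul_assoc]
      rw [show pw a (iC x) * (pw b (jC x) * yC x) * (pw a (iC x') * (pw b (jC x') * yC x'))
          = pw a (iC x) * (pw b (jC x) * (yC x * (pw a (iC x') * (pw b (jC x') * yC x'))))
          from by simp only [mul_assoc]]
      rw [hswap3 (show Commute (yC x) (pw a (iC x')) from (hDa (hyD x)).pow_right _)]
      rw [hswap3 (show Commute (yC x) (pw b (jC x')) from (hDb (hyD x)).pow_right _)]
      rw [c.u_swap b (pw a (iC x'))]
      rw [show c.B b (pw a (iC x')) = -(iC x') from by rw [c.B_pw_right, hBba]; ring]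
      rw [pw_merge0 (c.hord b), pw_merge0 (c.hord a), c.cg_rot]
    -- D-data for the recursive call
    have haD : a ∉ D := by
      intro haD
      exact hab ((hDb haD).eq)
    have hcardD : Nat.card ↥D < n := by
      have hle : Nat.card ↥D ≤ Nat.card G := Subgroup.card_le_card_group D
      have hne : Nat.card ↥D ≠ Nat.card G := by
        intro he
        have : D = ⊤ := Subgroup.eq_top_of_card_eq D (by exact he)
        exact haD (this ▸ Subgroup.mem_top a)
      omega
    have hγ₀D : γ₀ ∈ D := hmemD.mpr
      ⟨Subgroup.mem_center_iff.mp hγ₀cen a, Subgroup.mem_center_iff.mp hγ₀cen b⟩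
    set γD : ↥D := ⟨γ₀, hγ₀D⟩ with hγD
    have hordD : ∀ x : ↥D, x ^ p = 1 := by
      intro x
      ext
      push_cast
      exact hord ↑x
    have hγDcen : γD ∈ Subgroup.center ↥D := by
      rw [Subgroup.mem_center_iff]
      intro g
      ext
      push_cast
      exact Subgroup.mem_center_iff.mp hγ₀cen ↑g
    have hγDcomm : ∀ x y : ↥D, ⁅x, y⁆ ∈ Subgroup.zpowers γD := by
      intro x y
      have hmem : ⁅(x : G), (y : G)⁆ ∈ Subgroup.zpowers γ₀ := hzp ▸ hγcomm (↑x) (↑y)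
      obtain ⟨m, hm⟩ := Subgroup.mem_zpowers_iff.mp hmem
      refine Subgroup.mem_zpowers_iff.mpr ⟨m, ?_⟩
      ext
      rw [show ((γD ^ m : ↥D) : G) = γ₀ ^ m from by push_cast; rfl, hm]
      rfl
    obtain ⟨φD, hφD⟩ := IH (Nat.card ↥D) hcardD ↥D le_rfl hordD γD hγDcen hγDcomm t ht
    -- assemble the automorphism
    set t' : ZMod p := (t : ZMod p) with ht'
    have ht'0 : t' ≠ 0 := by
      rw [ht', Ne, ZMod.natCast_eq_zero_iff]
      exact ht
    set Y : G → G := fun x => ↑(φD ⟨yC x, hyD x⟩) with hY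
    have hYD : ∀ x : G, Y x ∈ D := fun x => (φD ⟨yC x, hyD x⟩).2
    -- φD on powers of γD
    have hφDγ : ∀ k : ZMod p, ↑(φD (pw γD k)) = pw γ₀ (k * t') := by
      intro k
      have hkc : pw γD k ∈ Subgroup.center ↥D := Subgroup.pow_mem _ hγDcen _
      rw [hφD _ hkc]
      push_cast
      rw [show ((pw γD k : ↥D) : G) = pw γ₀ k from by rw [pw, pw]; push_cast; rfl]
      rw [pw, ← pow_mul, pow_eq_pw (hord γ₀)]
      congr 1
      push_cast
      simp [ZMod.natCast_val, ZMod.cast_id, ht']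
    have hYcoc : ∀ x x' : G,
        Y (x * x') = pw γ₀ ((jC x * -(iC x')) * t') * (Y x * Y x') := by
      intro x x'
      have h1 : (⟨yC (x * x'), hyD _⟩ : ↥D)
          = pw γD (jC x * -(iC x')) * (⟨yC x, hyD x⟩ * ⟨yC x', hyD x'⟩) := by
        ext
        push_cast
        have := hprod x x'
        have h2 : yC (x * x') = pw c.gam (jC x * -(iC x')) * (yC x * yC x') := by
          rw [hyC]
          simp only []
          rw [hiadd, hjadd]
          conv_lhs => rw [this]
          rw [inv_mul_cancel_left, inv_mul_cancel_left]
        rw [h2]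
        congr 1
      rw [hY]
      simp only []
      rw [h1, map_mul, map_mul]
      push_cast
      rw [hφDγ]
    set f : G → G := fun x => pw a (t' * iC x) * (pw b (jC x) * Y x) with hfd
    have hmul : ∀ x x' : G, f (x * x') = f x * f x' := by
      intro x x'
      rw [hfd]
      simp only []
      rw [hiadd, hjadd, hYcoc]
      rw [show pw a (t' * iC x) * (pw b (jC x) * Y x) * (pw a (t' * iC x') * (pw b (jC x') * Y x'))
          = pw a (t' * iC x) * (pw b (jC x) * (Y x * (pw a (t' * iC x') * (pw b (jC x') * Y x'))))
          from by simp only [mul_assoc]]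
      have hswap3 : ∀ {g h : G}, Commute g h → ∀ w : G, g * (h * w) = h * (g * w) := by
        intro g h hgh w
        rw [← mul_assoc, hgh.eq, mul_assoc]
      rw [hswap3 (show Commute (Y x) (pw a (t' * iC x')) from (hDa (hYD x)).pow_right _)]
      rw [hswap3 (show Commute (Y x) (pw b (jC x')) from (hDb (hYD x)).pow_right _)]
      rw [c.u_swap b (pw a (t' * iC x'))]
      rw [show c.B b (pw a (t' * iC x')) = -(t' * iC x') from by rw [c.B_pw_right, hBba]; ring]
      rw [pw_merge0 (c.hord b), pw_merge0 (c.hord a),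
        c.cg_rot (jC x * -(t' * iC x')) (pw b (jC x + jC x')) (Y x * Y x')]
      rw [show t' * (iC x + iC x') = t' * iC x + t' * iC x' from by ring]
      rw [show (jC x * -(iC x')) * t' = jC x * -(t' * iC x') from by ring]
    set F : G →* G := MonoidHom.mk' f hmul with hF
    have hinj : Function.Injective F := by
      rw [injective_iff_map_eq_one]
      intro x hx
      have hfx : f x = 1 := hx
      have hib : t' * iC x = 0 := by
        have h0 : c.B (f x) b = t' * iC x := by
          rw [hfd]
          simp only []
          rw [c.B_mul_left, c.B_mul_left, c.B_pw_left, c.B_pw_left, c.B_self,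
            hBab, hBDb (hYD x)]
          ring
        rw [hfx, c.B_one_left] at h0
        exact h0.symm
      have hi0 : iC x = 0 := by
        rcases mul_eq_zero.mp hib with h | h
        · exact absurd h ht'0
        · exact h
      have hj0 : jC x = 0 := by
        have h0 : c.B (f x) a = -(jC x) := by
          rw [hfd]
          simp only []
          rw [c.B_mul_left, c.B_mul_left, c.B_pw_left, c.B_pw_left, c.B_self,
            hBba, hBDa (hYD x)]
          ring
        rw [hfx, c.B_one_left] at h0
        linear_combination h0
      have hyx : Y x = 1 := by
        have := hfx
        rw [hfd] at this
        simp only [] at this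
        rw [hi0, hj0, mul_zero, pw_zero, pw_zero, one_mul, one_mul] at this
        exact this
      have hyx1 : yC x = 1 := by
        have h1 : φD ⟨yC x, hyD x⟩ = 1 := by
          apply Subtype.ext
          show Y x = ((1 : ↥D) : G)
          rw [hyx]
          rfl
        have h2 : (⟨yC x, hyD x⟩ : ↥D) = 1 := by
          have := φD.injective (h1.trans (map_one φD).symm)
          exact this
        exact congrArg Subtype.val h2
      have := hdecomp x
      rw [hi0, hj0, hyx1, pw_zero, pw_zero, one_mul, one_mul] at this
      exact this
    refine ⟨MulEquiv.ofBijective F ((Finite.injective_iff_bijective).mp hinj), ?_⟩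
    intro z hz
    simp only [MulEquiv.ofBijective_apply]
    show f z = z ^ t
    have hiz : iC z = 0 := c.B_central_left hz b
    have hjz : jC z = 0 := by
      show -(c.B z a) = 0
      rw [c.B_central_left hz a, neg_zero]
    have hyz : yC z = z := by
      rw [hyC]
      simp only []
      rw [hiz, hjz, pw_zero, pw_zero, inv_one, one_mul, one_mul]
    have hzD : z ∈ D := hmemD.mpr
      ⟨Subgroup.mem_center_iff.mp hz a, Subgroup.mem_center_iff.mp hz b⟩
    have hzDcen : (⟨yC z, hyD z⟩ : ↥D) ∈ Subgroup.center ↥D := by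
      rw [Subgroup.mem_center_iff]
      intro g
      ext
      push_cast [hyz]
      exact Subgroup.mem_center_iff.mp hz ↑g
    rw [hfd]
    simp only []
    rw [hiz, hjz, mul_zero, pw_zero, pw_zero, one_mul, one_mul, hY]
    simp only []
    rw [hφD _ hzDcen]
    push_cast [hyz]
    rfl


namespace Ctx

variable [Fact p.Prime] (c : Ctx p G)

lemma B_one_right (x : G) : c.B x 1 = 0 :=
  c.B_eq (by rw [show ⁅x, (1:G)⁆ = 1 from by group]; simp)

lemma B_inv_right (x z : G) : c.B x z⁻¹ = -c.B x z := by
  have h := c.B_mul_right x z z⁻¹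
  rw [mul_inv_cancel, c.B_one_right] at h
  linear_combination -h

/-- Coset automorphism: conjugation moving `h * z` to `h` for central `z`. -/
lemma coset_auto (hZ : Subgroup.center G = Subgroup.zpowers c.gam)
    {h : G} (hh : h ∉ Subgroup.center G) {z : G} (hz : z ∈ Subgroup.center G) :
    ∃ φ : G ≃* G, φ (h * z) = h := by
  have hzinv : z⁻¹ ∈ Subgroup.zpowers c.gam := hZ ▸ (Subgroup.center G).inv_mem hz
  obtain ⟨k, hk⟩ := (mem_zpowers_iff_pw (c.hord c.gam)).mp hzinv
  obtain ⟨x, hx⟩ := c.B_surj hh k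
  refine ⟨MulAut.conj x, ?_⟩
  have h1 : MulAut.conj x (h * z) = x * (h * z) * x⁻¹ := rfl
  have hzc : ∀ w : G, w * z = z * w := fun w => Subgroup.mem_center_iff.mp hz w
  have h2 : x * (h * z) * x⁻¹ = (x * h * x⁻¹) * z := by
    rw [show x * (h * z) * x⁻¹ = x * h * (z * x⁻¹) from by group, ← hzc x⁻¹]
    group
  have h3 : x * h * x⁻¹ = ⁅x, h⁆ * h := by group
  rw [h1, h2, h3, c.B_spec x h, hx, ← hk, mul_assoc, hzc h]
  group

/-- Transvection step: if `B g h ≠ 0` there is an automorphism fixing the center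
  pointwise and sending `g` to `h` times a central element. -/
lemma transvection_step [Finite G] (hodd : Odd p) {g h : G} (hB : c.B g h ≠ 0) :
    ∃ (φ : G ≃* G) (z : G), z ∈ Subgroup.center G ∧
      (∀ w ∈ Subgroup.center G, φ w = w) ∧ φ g = h * z := by
  obtain ⟨φ, hφ⟩ := c.transvection hodd (g⁻¹ * h) (c.B g h)⁻¹
  have hBgu : c.B g (g⁻¹ * h) = c.B g h := by
    rw [c.B_mul_right, c.B_inv_right, c.B_self]
    ring
  have hfix : ∀ w ∈ Subgroup.center G, φ w = w := by
    intro w hw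
    rw [hφ w, c.B_central_left hw]
    simp
  have hp1 : 1 < p := (Fact.out : p.Prime).one_lt
  refine ⟨φ, pw c.gam (-2⁻¹ * (c.B g h)⁻¹ * c.B g (g⁻¹ * h) ^ 2),
    c.pw_gam_mem_center _, hfix, ?_⟩
  rw [hφ g, hBgu, inv_mul_cancel₀ hB, pw_one_exp hp1, ← mul_assoc,
    show g * (g⁻¹ * h) = h from by group]

/-- Transitivity on non-central elements. -/
lemma noncentral_trans [Finite G] (hodd : Odd p)
    (hZ : Subgroup.center G = Subgroup.zpowers c.gam)
    {g h : G} (hg : g ∉ Subgroup.center G) (hh : h ∉ Subgroup.center G) :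
    ∃ φ : G ≃* G, φ g = h := by
  have hstep : ∀ {g' : G}, c.B g' h ≠ 0 → g' ∉ Subgroup.center G →
      ∃ φ : G ≃* G, φ g' = h := by
    intro g' hB hg'
    obtain ⟨φ₁, z, hz, _, hφ₁⟩ := c.transvection_step hodd hB
    obtain ⟨φ₂, hφ₂⟩ := c.coset_auto hZ hh hz
    exact ⟨φ₁.trans φ₂, by
      simp only [MulEquiv.trans_apply]
      rw [hφ₁, hφ₂]⟩
  by_cases hB : c.B g h ≠ 0
  · exact hstep hB hg
  · push_neg at hB
    -- find a middle element w with B g w ≠ 0 and B w h ≠ 0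
    obtain ⟨a', ha'⟩ : ∃ x, c.B g x ≠ 0 := by
      obtain ⟨x, hx⟩ : ∃ x, c.B x g ≠ 0 := by
        by_contra hcon
        push_neg at hcon
        exact hg (c.mem_center_iff_B.mpr hcon)
      exact ⟨x, fun h0 => hx (by rw [c.B_swap, h0, neg_zero])⟩
    obtain ⟨b', hb'⟩ : ∃ x, c.B x h ≠ 0 := by
      by_contra hcon
      push_neg at hcon
      exact hh (c.mem_center_iff_B.mpr hcon)
    obtain ⟨w, hgw, hwh⟩ : ∃ w, c.B g w ≠ 0 ∧ c.B w h ≠ 0 := by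
      by_cases h1 : c.B a' h ≠ 0
      · exact ⟨a', ha', h1⟩
      · by_cases h2 : c.B g b' ≠ 0
        · exact ⟨b', h2, hb'⟩
        · push_neg at h1 h2
          refine ⟨a' * b', ?_, ?_⟩
          · rw [c.B_mul_right, h2, add_zero]
            exact ha'
          · rw [c.B_mul_left, h1, zero_add]
            exact hb'
    have hw : w ∉ Subgroup.center G := by
      intro hwc
      exact hwh (c.B_central_left hwc h)
    -- move g to w (up to center), then w to h
    have hBgw' : c.B g w ≠ 0 := hgw
    obtain ⟨φ₁, z₁, hz₁, _, hφ₁⟩ := c.transvection_step hodd hBgw'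
    obtain ⟨φ₂, z₂, hz₂, hfix₂, hφ₂⟩ := c.transvection_step hodd hwh
    obtain ⟨φ₃, hφ₃⟩ := c.coset_auto hZ hh
      (Subgroup.mul_mem _ hz₂ hz₁)
    refine ⟨(φ₁.trans φ₂).trans φ₃, ?_⟩
    simp only [MulEquiv.trans_apply]
    rw [hφ₁, map_mul, hφ₂, hfix₂ z₁ hz₁]
    rw [show h * z₂ * z₁ = h * (z₂ * z₁) from by group]
    rw [hφ₃]

end Ctx

lemma mulequiv_center_mem {G : Type*} [Group G] (ψ : G ≃* G) {x : G}
    (hx : x ∈ Subgroup.center G) : ψ x ∈ Subgroup.center G := by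
  rw [Subgroup.mem_center_iff]
  intro y
  have hx' := Subgroup.mem_center_iff.mp hx (ψ.symm y)
  conv_lhs => rw [← ψ.apply_symm_apply y]
  rw [← map_mul, hx', map_mul, ψ.apply_symm_apply]

end ExtraAux

/-- In an extraspecial p-group of exponent p (p odd), two elements are automorphic iff
they have the same order and are simultaneously central or noncentral. -/
theorem extraspecial_exp_p_automorphic_iff {p : ℕ} (hp : p.Prime) (hodd : Odd p)
    (G : Type*) [Group G] [Finite G] (hG : IsExtraspecial p G)
    (hexp : Monoid.exponent G = p) (g h : G) :
    (∃ φ : G ≃* G, φ g = h) ↔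
      (orderOf g = orderOf h ∧ (g ∈ Subgroup.center G ↔ h ∈ Subgroup.center G)) := by
  haveI : Fact p.Prime := ⟨hp⟩
  obtain ⟨hpgrp, hcommeq, hfrat, hcardZ⟩ := hG
  have hord : ∀ x : G, x ^ p = 1 := fun x => hexp ▸ Monoid.pow_exponent_eq_one x
  have hcommmem : ∀ x y : G, ⁅x, y⁆ ∈ Subgroup.center G := by
    intro x y
    rw [hcommeq]
    exact Subgroup.commutator_mem_commutator (Subgroup.mem_top x) (Subgroup.mem_top y)
  constructor
  · rintro ⟨φ, rfl⟩
    refine ⟨(orderOf_injective φ.toMonoidHom φ.injective g).symm, ?_, ?_⟩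
    · exact fun hx => ExtraAux.mulequiv_center_mem φ hx
    · intro hx
      have := ExtraAux.mulequiv_center_mem φ.symm hx
      simpa using this
  · rintro ⟨horder, hcent⟩
    by_cases hgZ : g ∈ Subgroup.center G
    · -- central case
      have hhZ : h ∈ Subgroup.center G := hcent.mp hgZ
      by_cases hg1 : g = 1
      · have hh1 : h = 1 := by
          have : orderOf h = 1 := by rw [← horder, hg1, orderOf_one]
          exact orderOf_eq_one_iff.mp this
        exact ⟨MulEquiv.refl G, by rw [hg1, hh1]; rfl⟩
      · have hordg : orderOf g = p := orderOf_eq_prime (hord g) hg1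
        have hZg : Subgroup.center G = Subgroup.zpowers g := by
          symm
          apply Subgroup.eq_of_le_of_card_ge (Subgroup.zpowers_le.mpr hgZ)
          rw [Nat.card_zpowers, hordg, hcardZ]
        have hcommz : ∀ x y : G, ⁅x, y⁆ ∈ Subgroup.zpowers g := fun x y =>
          hZg ▸ hcommmem x y
        have hhzp : h ∈ Subgroup.zpowers g := hZg ▸ hhZ
        obtain ⟨k, hk⟩ := (ExtraAux.mem_zpowers_iff_pw (hord g)).mp hhzp
        have hh1 : h ≠ 1 := by
          intro h1
          rw [h1, orderOf_one] at horder
          exact hp.one_lt.ne' (hordg ▸ horder.symm ▸ horder)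
        have hndvd : ¬ p ∣ k.val := by
          intro hdvd
          have hlt : k.val < p := ZMod.val_lt k
          have h0 : k.val = 0 := Nat.eq_zero_of_dvd_of_lt hdvd hlt
          apply hh1
          rw [hk, ExtraAux.pw, h0, pow_zero]
        obtain ⟨φ, hφ⟩ := ExtraAux.scaling (Nat.card G) G le_rfl hord g hgZ hcommz
          k.val hndvd
        exact ⟨φ, by rw [hφ g hgZ]; exact hk.symm⟩
    · -- noncentral case
      have hhZ : h ∉ Subgroup.center G := fun hh => hgZ (hcent.mpr hh)
      -- build a context
      have hnontriv : Nontrivial ↥(Subgroup.center G) := by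
        apply Finite.one_lt_card_iff_nontrivial.mp
        rw [hcardZ]
        exact hp.one_lt
      obtain ⟨ζ₀, hζ₀⟩ := exists_ne (1 : ↥(Subgroup.center G))
      have hζ1 : (ζ₀ : G) ≠ 1 := fun h0 => hζ₀ (Subtype.ext h0)
      have hζcen : (ζ₀ : G) ∈ Subgroup.center G := ζ₀.2
      have hordζ : orderOf (ζ₀ : G) = p := orderOf_eq_prime (hord _) hζ1
      have hZζ : Subgroup.center G = Subgroup.zpowers (ζ₀ : G) := by
        symm
        apply Subgroup.eq_of_le_of_card_ge (Subgroup.zpowers_le.mpr hζcen)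
        rw [Nat.card_zpowers, hordζ, hcardZ]
      set c : ExtraAux.Ctx p G :=
        ⟨(ζ₀ : G), hζcen, hord, fun x y => hZζ ▸ hcommmem x y, hζ1⟩ with hc
      exact c.noncentral_trans hodd hZζ hgZ hhZ
end

section
/- Let p be an odd prime and G an extraspecial p-group of exponent p. Then the natural action of the automorphism group Aut(G) on G has exactly three orbits. -/
set_option linter.unusedSectionVars false

open scoped commutatorElement


section ESComm
variable {G : Type*} [Group G]

lemma ES_central_comm {c : G} (h : c ∈ Subgroup.center G) (g : G) : g * c = c * g :=
  Subgroup.mem_center_iff.mp h g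

variable (hc : ∀ a b : G, ⁅a, b⁆ ∈ Subgroup.center G)
include hc

/-- exchange law -/
lemma ES_exch (a b : G) : a * b = b * a * ⁅a, b⁆ := by
  have h := ES_central_comm (hc a b)
  calc a * b = (a*b*a⁻¹*b⁻¹) * (b * a) := by group
    _ = b * a * (a*b*a⁻¹*b⁻¹) := by
        rw [← commutatorElement_def, ← h (b*a), commutatorElement_def]
    _ = b * a * ⁅a, b⁆ := by rw [← commutatorElement_def]

lemma ES_comm_mul_left (a b g : G) : ⁅a * b, g⁆ = ⁅a, g⁆ * ⁅b, g⁆ := by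
  have h := ES_central_comm (hc b g)
  have : b * g * b⁻¹ = ⁅b, g⁆ * g := by rw [commutatorElement_def]; group
  calc ⁅a * b, g⁆ = a * (b * g * b⁻¹) * a⁻¹ * g⁻¹ := by rw [commutatorElement_def]; group
    _ = a * (⁅b, g⁆ * g) * a⁻¹ * g⁻¹ := by rw [this]
    _ = a * ⁅b, g⁆ * (g * a⁻¹ * g⁻¹) := by group
    _ = ⁅b, g⁆ * a * (g * a⁻¹ * g⁻¹) := by rw [h a]
    _ = ⁅b, g⁆ * ⁅a, g⁆ := by rw [commutatorElement_def]; group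
    _ = ⁅a, g⁆ * ⁅b, g⁆ := (ES_central_comm (hc b g) _).symm

lemma ES_comm_mul_right (g a b : G) : ⁅g, a * b⁆ = ⁅g, a⁆ * ⁅g, b⁆ := by
  have h1 : ⁅a * b, g⁆ = ⁅a, g⁆ * ⁅b, g⁆ := ES_comm_mul_left hc a b g
  have h2 : ⁅g, a*b⁆ = ⁅a*b, g⁆⁻¹ := (commutatorElement_inv _ _).symm
  rw [h2, h1, mul_inv_rev, commutatorElement_inv, commutatorElement_inv]
  exact ES_central_comm (hc g a) _

lemma ES_comm_pow_left (a g : G) (n : ℕ) : ⁅a ^ n, g⁆ = ⁅a, g⁆ ^ n := by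
  induction n with
  | zero => simp
  | succ n ih => rw [pow_succ, ES_comm_mul_left hc, ih, pow_succ]

lemma ES_comm_pow_right (g a : G) (n : ℕ) : ⁅g, a ^ n⁆ = ⁅g, a⁆ ^ n := by
  induction n with
  | zero => simp
  | succ n ih => rw [pow_succ, ES_comm_mul_right hc, ih, pow_succ]

lemma ES_comm_inv_left (a g : G) : ⁅a⁻¹, g⁆ = ⁅a, g⁆⁻¹ := by
  have := ES_comm_mul_left hc a a⁻¹ g
  simp only [mul_inv_cancel, commutatorElement_one_left] at this
  rw [eq_comm, inv_eq_iff_mul_eq_one, ← this]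

lemma ES_comm_inv_right (g a : G) : ⁅g, a⁻¹⁆ = ⁅g, a⁆⁻¹ := by
  rw [← commutatorElement_inv a⁻¹ g, ES_comm_inv_left hc, commutatorElement_inv]

lemma ES_comm_zpow_left (a g : G) (n : ℤ) : ⁅a ^ n, g⁆ = ⁅a, g⁆ ^ n := by
  cases n with
  | ofNat m => simpa using ES_comm_pow_left hc a g m
  | negSucc m =>
      rw [zpow_negSucc, zpow_negSucc, ES_comm_inv_left hc, ES_comm_pow_left hc]

end ESComm

section ESDl
variable {G : Type*} [Group G]

lemma ES_pow_mod {g : G} {p : ℕ} (hg : g ^ p = 1) (n : ℕ) : g ^ n = g ^ (n % p) := by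
  conv_lhs => rw [← Nat.div_add_mod n p]
  rw [pow_add, pow_mul, hg, one_pow, one_mul]

/-- `z₀ ^ a.val` for `a : ZMod p`. -/
def ESe {p : ℕ} (z₀ : G) (a : ZMod p) : G := z₀ ^ a.val

section
variable {p : ℕ} (hp1 : 1 < p) {z₀ : G} (ho : orderOf z₀ = p)
include hp1 ho

lemma ESzpow : z₀ ^ p = 1 := by rw [← ho]; exact pow_orderOf_eq_one z₀

lemma ESe_add (a b : ZMod p) : ESe z₀ (a + b) = ESe z₀ a * ESe z₀ b := by
  haveI : NeZero p := ⟨by omega⟩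
  unfold ESe
  rw [ZMod.val_add, ← ES_pow_mod (ESzpow hp1 ho), pow_add]

lemma ESe_zero : ESe (p := p) z₀ 0 = 1 := by
  haveI : NeZero p := ⟨by omega⟩
  simp [ESe, ZMod.val_zero]

lemma ESe_one : ESe (p := p) z₀ 1 = z₀ := by
  haveI : Fact (1 < p) := ⟨hp1⟩
  simp [ESe, ZMod.val_one]

lemma ESe_inj {a b : ZMod p} (h : ESe z₀ a = ESe z₀ b) : a = b := by
  haveI : NeZero p := ⟨by omega⟩
  have ha : a.val < orderOf z₀ := by rw [ho]; exact ZMod.val_lt a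
  have hb : b.val < orderOf z₀ := by rw [ho]; exact ZMod.val_lt b
  exact ZMod.val_injective p (pow_injOn_Iio_orderOf ha hb h)

lemma ESe_neg (a : ZMod p) : ESe z₀ (-a) = (ESe z₀ a)⁻¹ := by
  rw [eq_inv_iff_mul_eq_one, ← ESe_add hp1 ho, neg_add_cancel, ESe_zero hp1 ho]

lemma ESe_pow (a b : ZMod p) : (ESe z₀ a) ^ b.val = ESe z₀ (a * b) := by
  haveI : NeZero p := ⟨by omega⟩
  unfold ESe
  rw [← pow_mul, ZMod.val_mul, ← ES_pow_mod (ESzpow hp1 ho)]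

end

open scoped Classical in
/-- discrete log base `z₀`, valued in `ZMod p`. -/
noncomputable def ESdl (p : ℕ) (z₀ : G) (w : G) : ZMod p :=
  if h : ∃ k : ℕ, z₀ ^ k = w then ((h.choose : ℕ) : ZMod p) else 0

lemma ESdl_spec {p : ℕ} (hp1 : 1 < p) {z₀ : G} (ho : orderOf z₀ = p) {w : G}
    (hex : ∃ k : ℕ, z₀ ^ k = w) : ESe z₀ (ESdl p z₀ w) = w := by
  haveI : NeZero p := ⟨by omega⟩
  rw [ESdl, dif_pos hex]
  unfold ESe
  rw [ZMod.val_natCast, ← ES_pow_mod (ESzpow hp1 ho)]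
  exact hex.choose_spec

lemma ESdl_eq_iff {p : ℕ} (hp1 : 1 < p) {z₀ : G} (ho : orderOf z₀ = p) {w : G}
    (hex : ∃ k : ℕ, z₀ ^ k = w) {a : ZMod p} : ESdl p z₀ w = a ↔ w = ESe z₀ a := by
  constructor
  · rintro rfl; exact (ESdl_spec hp1 ho hex).symm
  · rintro rfl
    exact ESe_inj hp1 ho (ESdl_spec hp1 ho hex)

end ESDl

section ESForm
variable {G : Type*} [Group G] {p : ℕ} {z₀ : G}

/-- the commutator form with values in `ZMod p`. -/
noncomputable def ESf (p : ℕ) (z₀ : G) (a b : G) : ZMod p := ESdl p z₀ ⁅a, b⁆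

variable (hp1 : 1 < p)
  (hc : ∀ a b : G, ⁅a, b⁆ ∈ Subgroup.center G)
  (hz : z₀ ∈ Subgroup.center G) (ho : orderOf z₀ = p)
  (hzg : ∀ w ∈ Subgroup.center G, ∃ k : ℕ, z₀ ^ k = w)
include hp1 hc ho hzg

lemma ESf_spec (a b : G) : ESe z₀ (ESf p z₀ a b) = ⁅a, b⁆ :=
  ESdl_spec hp1 ho (hzg _ (hc a b))

lemma ESf_eq_iff (a b : G) {x : ZMod p} : ESf p z₀ a b = x ↔ ⁅a, b⁆ = ESe z₀ x :=
  ESdl_eq_iff hp1 ho (hzg _ (hc a b))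

lemma ESf_eq_zero_iff (a b : G) : ESf p z₀ a b = 0 ↔ ⁅a, b⁆ = 1 := by
  rw [ESf_eq_iff hp1 hc ho hzg, ESe_zero hp1 ho]

lemma ESf_mul_left (a b g : G) :
    ESf p z₀ (a * b) g = ESf p z₀ a g + ESf p z₀ b g := by
  rw [ESf_eq_iff hp1 hc ho hzg, ES_comm_mul_left hc, ESe_add hp1 ho,
    ESf_spec hp1 hc ho hzg, ESf_spec hp1 hc ho hzg]

lemma ESf_mul_right (g a b : G) :
    ESf p z₀ g (a * b) = ESf p z₀ g a + ESf p z₀ g b := by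
  rw [ESf_eq_iff hp1 hc ho hzg, ES_comm_mul_right hc, ESe_add hp1 ho,
    ESf_spec hp1 hc ho hzg, ESf_spec hp1 hc ho hzg]

lemma ESf_self (a : G) : ESf p z₀ a a = 0 := by
  rw [ESf_eq_zero_iff hp1 hc ho hzg]; exact commutatorElement_self a

lemma ESf_inv_left (a g : G) : ESf p z₀ a⁻¹ g = - ESf p z₀ a g := by
  have h := ESf_mul_left hp1 hc ho hzg a a⁻¹ g
  simp only [mul_inv_cancel] at h
  have h1 : ESf p z₀ (1:G) g = 0 := by
    rw [ESf_eq_zero_iff hp1 hc ho hzg]; exact commutatorElement_one_left g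
  rw [h1] at h; linear_combination -h

lemma ESf_pow_left (a g : G) (n : ℕ) :
    ESf p z₀ (a ^ n) g = (n : ZMod p) * ESf p z₀ a g := by
  induction n with
  | zero => simp only [pow_zero, Nat.cast_zero, zero_mul]
            rw [ESf_eq_zero_iff hp1 hc ho hzg]; exact commutatorElement_one_left g
  | succ n ih =>
      rw [pow_succ, ESf_mul_left hp1 hc ho hzg, ih]
      push_cast; ring

lemma ESf_central_left {w : G} (hw : w ∈ Subgroup.center G) (g : G) :
    ESf p z₀ w g = 0 := by
  rw [ESf_eq_zero_iff hp1 hc ho hzg, commutatorElement_eq_one_iff_commute]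
  exact (Subgroup.mem_center_iff.mp hw g).symm

lemma ESf_central_right {w : G} (hw : w ∈ Subgroup.center G) (g : G) :
    ESf p z₀ g w = 0 := by
  rw [ESf_eq_zero_iff hp1 hc ho hzg, commutatorElement_eq_one_iff_commute]
  exact Subgroup.mem_center_iff.mp hw g

end ESForm

section EStv
variable {G : Type*} [Group G] {p : ℕ} {z₀ : G}

lemma ES_left_comm {a b : G} (h : a * b = b * a) (c : G) :
    a * (b * c) = b * (a * c) := by rw [← mul_assoc, h, mul_assoc]

lemma ES_push {a b c : G} (h : a * b = c) (x : G) : a * (b * x) = c * x := by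
  rw [← mul_assoc, h]

lemma ES_upow_add {u : G} (hp1 : 1 < p) (hu : u ^ p = 1) (x y : ZMod p) :
    u ^ x.val * u ^ y.val = u ^ (x + y).val := by
  haveI : NeZero p := ⟨by omega⟩
  rw [← pow_add, ZMod.val_add, ← ES_pow_mod hu]

/-- the transvection map -/
noncomputable def EStv (p : ℕ) (z₀ u : G) (ν : ZMod p) (g : G) : G :=
  g * u ^ (2 * ν * ESf p z₀ g u).val * ESe z₀ (-(ν * (ESf p z₀ g u) ^ 2))

variable (hp1 : 1 < p)
  (hc : ∀ a b : G, ⁅a, b⁆ ∈ Subgroup.center G)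
  (hep : ∀ g : G, g ^ p = 1)
  (hz : z₀ ∈ Subgroup.center G) (ho : orderOf z₀ = p)
  (hzg : ∀ w ∈ Subgroup.center G, ∃ k : ℕ, z₀ ^ k = w)
include hp1 hc hep hz ho hzg

lemma ESe_mem_center (x : ZMod p) : ESe z₀ x ∈ Subgroup.center G :=
  Subgroup.pow_mem _ hz _

lemma ESe_comm (x : ZMod p) (g : G) : ESe z₀ x * g = g * ESe z₀ x :=
  (ES_central_comm (ESe_mem_center hp1 hc hep hz ho hzg x) g).symm

lemma ES_u_h (u h : G) (x : ZMod p) :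
    u ^ x.val * h = h * (u ^ x.val * ESe z₀ (-(ESf p z₀ h u) * x)) := by
  have h1 : ⁅u ^ x.val, h⁆ = ESe z₀ (-(ESf p z₀ h u) * x) := by
    rw [ES_comm_pow_left hc, ← commutatorElement_inv, ← ESf_spec hp1 hc ho hzg h u,
      ← ESe_neg hp1 ho, ESe_pow hp1 ho]
  rw [ES_exch hc (u ^ x.val) h, h1, mul_assoc]

lemma EStv_mul (u : G) (ν : ZMod p) (g h : G) :
    EStv p z₀ u ν (g * h) = EStv p z₀ u ν g * EStv p z₀ u ν h := by
  set A := ESf p z₀ g u with hA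
  set B := ESf p z₀ h u with hB
  have hAB : ESf p z₀ (g * h) u = A + B := ESf_mul_left hp1 hc ho hzg g h u
  unfold EStv
  rw [hAB, ← hA, ← hB]
  set a1 := 2 * ν * A with ha1
  set a2 := 2 * ν * B with ha2
  set a3 := 2 * ν * (A + B) with ha3
  set q1 := -(ν * A ^ 2) with hq1
  set q2 := -(ν * B ^ 2) with hq2
  set q3 := -(ν * (A + B) ^ 2) with hq3
  simp only [mul_assoc]
  rw [ES_left_comm (ESe_comm hp1 hc hep hz ho hzg q1 h)]
  rw [ES_left_comm (ESe_comm hp1 hc hep hz ho hzg q1 (u ^ a2.val))]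
  rw [ES_push (by rw [ES_u_h hp1 hc hep hz ho hzg u h a1] :
      u ^ a1.val * h = h * (u ^ a1.val * ESe z₀ (-B * a1)))]
  simp only [mul_assoc]
  rw [ES_left_comm (ESe_comm hp1 hc hep hz ho hzg (-B * a1) (u ^ a2.val))]
  rw [ES_push (ES_upow_add hp1 (hep u) a1 a2)]
  rw [← ESe_add hp1 ho, ← ESe_add hp1 ho]
  rw [show a3 = a1 + a2 by rw [ha1, ha2, ha3]; ring,
    show q3 = -B * a1 + (q1 + q2) by rw [hq1, hq2, hq3, ha1]; ring]

lemma EStv_f (u : G) (ν : ZMod p) (g : G) :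
    ESf p z₀ (EStv p z₀ u ν g) u = ESf p z₀ g u := by
  unfold EStv
  rw [ESf_mul_left hp1 hc ho hzg, ESf_mul_left hp1 hc ho hzg,
    ESf_pow_left hp1 hc ho hzg, ESf_self hp1 hc ho hzg,
    ESf_central_left hp1 hc ho hzg (ESe_mem_center hp1 hc hep hz ho hzg _)]
  ring

lemma EStv_inv (u : G) (ν : ZMod p) (g : G) :
    EStv p z₀ u (-ν) (EStv p z₀ u ν g) = g := by
  have hf := EStv_f hp1 hc hep hz ho hzg u ν g
  have expand : ∀ x : G, EStv p z₀ u (-ν) x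
      = x * u ^ (2 * -ν * ESf p z₀ x u).val * ESe z₀ (-(-ν * (ESf p z₀ x u) ^ 2)) :=
    fun x => rfl
  rw [expand, hf]
  unfold EStv
  set A := ESf p z₀ g u with hA
  set a1 := 2 * ν * A with ha1
  set a2 := 2 * -ν * A with ha2
  set q1 := -(ν * A ^ 2) with hq1
  set q2 := -(-ν * A ^ 2) with hq2
  simp only [mul_assoc]
  rw [ES_left_comm (ESe_comm hp1 hc hep hz ho hzg q1 (u ^ a2.val))]
  rw [ES_push (ES_upow_add hp1 (hep u) a1 a2)]
  rw [← ESe_add hp1 ho]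
  rw [show a1 + a2 = 0 by rw [ha1, ha2]; ring, show q1 + q2 = 0 by rw [hq1, hq2]; ring,
    ESe_zero hp1 ho]
  haveI : NeZero p := ⟨by omega⟩
  simp [ZMod.val_zero]

/-- the transvection as an automorphism -/
noncomputable def EStvAut (u : G) (ν : ZMod p) : G ≃* G where
  toFun := EStv p z₀ u ν
  invFun := EStv p z₀ u (-ν)
  left_inv g := EStv_inv hp1 hc hep hz ho hzg u ν g
  right_inv g := by
    have := EStv_inv hp1 hc hep hz ho hzg u (-ν) g
    rwa [neg_neg] at this
  map_mul' := EStv_mul hp1 hc hep hz ho hzg u ν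

end EStv

section EStrans
variable {G : Type*} [Group G] {p : ℕ} {z₀ : G}
variable (hp : p.Prime) (h2 : (2 : ZMod p) ≠ 0)
  (hc : ∀ a b : G, ⁅a, b⁆ ∈ Subgroup.center G)
  (hep : ∀ g : G, g ^ p = 1)
  (hz : z₀ ∈ Subgroup.center G) (ho : orderOf z₀ = p)
  (hzg : ∀ w ∈ Subgroup.center G, ∃ k : ℕ, z₀ ^ k = w)
include hp h2 hc hep hz ho hzg

lemma ES_hp1 : 1 < p := hp.one_lt

lemma ES_noncomm {x : G} (hx : x ∉ Subgroup.center G) : ∃ g : G, ⁅x, g⁆ ≠ 1 := by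
  by_contra hcon
  push_neg at hcon
  exact hx (Subgroup.mem_center_iff.mpr fun g =>
    (commutatorElement_eq_one_iff_commute.mp (hcon g)).symm.eq)

lemma ES_comm_surj {x : G} (hx : x ∉ Subgroup.center G) {w : G}
    (hw : w ∈ Subgroup.center G) : ∃ h : G, ⁅x, h⁆ = w := by
  haveI : Fact p.Prime := ⟨hp⟩
  have hp1 : 1 < p := hp.one_lt
  obtain ⟨g, hg⟩ := ES_noncomm hp h2 hc hep hz ho hzg hx
  set m := ESf p z₀ x g with hm
  have hm0 : m ≠ 0 := fun h0 => hg ((ESf_eq_zero_iff hp1 hc ho hzg x g).mp h0)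
  refine ⟨g ^ ((m⁻¹ * ESdl p z₀ w).val), ?_⟩
  rw [ES_comm_pow_right hc, ← ESf_spec hp1 hc ho hzg x g, ← hm, ESe_pow hp1 ho,
    ← mul_assoc, mul_inv_cancel₀ hm0, one_mul]
  exact ESdl_spec hp1 ho (hzg w hw)

lemma ES_coset {x : G} (hx : x ∉ Subgroup.center G) {w : G}
    (hw : w ∈ Subgroup.center G) : ∃ φ : G ≃* G, φ x = x * w := by
  have hxinv : x⁻¹ ∉ Subgroup.center G := fun h => hx (by simpa using inv_mem h)
  obtain ⟨h, hh⟩ := ES_comm_surj hp h2 hc hep hz ho hzg hxinv hw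
  refine ⟨(MulAut.conj h : G ≃* G), ?_⟩
  have : (MulAut.conj h : G ≃* G) x = h * x * h⁻¹ := rfl
  rw [this, ← hh, commutatorElement_def]
  group

lemma ES_transvect {x y : G} (hxy : ⁅x, y⁆ ≠ 1) :
    ∃ (φ : G ≃* G) (w : G), w ∈ Subgroup.center G ∧ φ x = y * w := by
  haveI : Fact p.Prime := ⟨hp⟩
  haveI : Fact (1 < p) := ⟨hp.one_lt⟩
  have hp1 : 1 < p := hp.one_lt
  set u := x⁻¹ * y with hu
  set m := ESf p z₀ x y with hm
  have hm0 : m ≠ 0 := fun h0 => hxy ((ESf_eq_zero_iff hp1 hc ho hzg x y).mp h0)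
  have hxxinv : ESf p z₀ x x⁻¹ = 0 := by
    rw [ESf_eq_zero_iff hp1 hc ho hzg, commutatorElement_eq_one_iff_commute]
    exact (Commute.refl x).inv_right
  have hF : ESf p z₀ x u = m := by
    rw [hu, ESf_mul_right hp1 hc ho hzg, hxxinv, zero_add, hm]
  set ν := (2 * m)⁻¹ with hν
  refine ⟨EStvAut hp1 hc hep hz ho hzg u ν, ESe z₀ (-(ν * m ^ 2)),
    ESe_mem_center hp1 hc hep hz ho hzg _, ?_⟩
  have happ : EStvAut hp1 hc hep hz ho hzg u ν x
      = x * u ^ (2 * ν * ESf p z₀ x u).val * ESe z₀ (-(ν * (ESf p z₀ x u) ^ 2)) := rfl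
  rw [happ, hF]
  have h1 : 2 * ν * m = 1 := by
    have : 2 * ν * m = (2 * m) * (2 * m)⁻¹ := by rw [hν]; ring
    rw [this, mul_inv_cancel₀ (mul_ne_zero h2 hm0)]
  rw [h1, ZMod.val_one, pow_one, hu]
  group

lemma ES_trans_noncentral {x y : G} (hx : x ∉ Subgroup.center G)
    (hy : y ∉ Subgroup.center G) : ∃ φ : G ≃* G, φ x = y := by
  have hp1 : 1 < p := hp.one_lt
  obtain ⟨a, ha⟩ := ES_noncomm hp h2 hc hep hz ho hzg hx
  obtain ⟨b, hb⟩ := ES_noncomm hp h2 hc hep hz ho hzg hy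
  -- find w with ⁅x,w⁆ ≠ 1 and ⁅y,w⁆ ≠ 1
  obtain ⟨w, hxw, hyw⟩ : ∃ w : G, ⁅x, w⁆ ≠ 1 ∧ ⁅y, w⁆ ≠ 1 := by
    by_cases h1 : ⁅y, a⁆ = 1
    · by_cases h2' : ⁅x, b⁆ = 1
      · refine ⟨a * b, ?_, ?_⟩
        · rw [ES_comm_mul_right hc, h2', mul_one]; exact ha
        · rw [ES_comm_mul_right hc, h1, one_mul]; exact hb
      · exact ⟨b, h2', hb⟩
    · exact ⟨a, ha, h1⟩
  obtain ⟨φ₁, w₁, hw₁, hφ₁⟩ := ES_transvect hp h2 hc hep hz ho hzg hxw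
  have hww₁ : ⁅w * w₁, y⁆ ≠ 1 := by
    rw [ES_comm_mul_left hc, (ESf_eq_zero_iff hp1 hc ho hzg w₁ y).symm.mpr
      (ESf_central_left hp1 hc ho hzg hw₁ y), mul_one]
    intro h
    exact hyw (by rw [← commutatorElement_inv, h, inv_one])
  obtain ⟨φ₂, w₂, hw₂, hφ₂⟩ := ES_transvect hp h2 hc hep hz ho hzg hww₁
  have hyw₂ : y * w₂ ∉ Subgroup.center G := fun h =>
    hy (by simpa using mul_mem h (inv_mem hw₂))
  obtain ⟨φ₃, hφ₃⟩ := ES_coset hp h2 hc hep hz ho hzg hyw₂ (inv_mem hw₂)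
  refine ⟨(φ₁.trans φ₂).trans φ₃, ?_⟩
  simp only [MulEquiv.trans_apply]
  rw [hφ₁, hφ₂, hφ₃, mul_assoc, mul_inv_cancel, mul_one]

end EStrans

universe u

/-- A decomposition of `G` as a product of two "complementary" abelian subsets. -/
structure ESdecompS (G : Type u) [Group G] where
  SA : Set G
  SB : Set G
  commA : ∀ a ∈ SA, ∀ b ∈ SA, a * b = b * a
  commB : ∀ a ∈ SB, ∀ b ∈ SB, a * b = b * a
  invA : ∀ a ∈ SA, a⁻¹ ∈ SA
  invB : ∀ a ∈ SB, a⁻¹ ∈ SB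
  mulA : ∀ a ∈ SA, ∀ b ∈ SA, a * b ∈ SA
  mulB : ∀ a ∈ SB, ∀ b ∈ SB, a * b ∈ SB
  oneB : (1 : G) ∈ SB
  disj : ∀ g ∈ SA, g ∈ SB → g = (1 : G)
  dec : ∀ g : G, ∃ a ∈ SA, ∃ b ∈ SB, g = a * b
  cenA : ∀ w ∈ Subgroup.center G, w ∈ SA

lemma ES_ab (p : ℕ) (hp : p.Prime) :
    ∀ (n : ℕ) (G : Type u) [Group G] [Finite G], Nat.card G ≤ n →
    (∀ g : G, g ^ p = 1) →
    (∀ a b : G, ⁅a, b⁆ ∈ Subgroup.center G) →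
    (∀ a b x y : G, ⁅x, y⁆ ≠ 1 → ∃ k : ℕ, ⁅a, b⁆ = ⁅x, y⁆ ^ k) →
    Nonempty (ESdecompS G) := by
  intro n
  induction n with
  | zero =>
      intro G _ _ hcard _ _ _
      have := Nat.card_pos (α := G)
      omega
  | succ n ih =>
      intro G _ _ hcard hep hcc hcyc
      by_cases habel : ∀ a b : G, a * b = b * a
      · refine ⟨⟨Set.univ, {1}, fun a _ b _ => habel a b, ?_, ?_, ?_, ?_, ?_, rfl, ?_, ?_, ?_⟩⟩
        · rintro a rfl b rfl; rfl
        · intro a _; trivial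
        · rintro a rfl; simp
        · intro a _ b _; trivial
        · rintro a rfl b rfl; simp
        · rintro g _ rfl; rfl
        · intro g; exact ⟨g, trivial, 1, rfl, (mul_one g).symm⟩
        · intro w _; trivial
      · push_neg at habel
        obtain ⟨x, y, hxy⟩ := habel
        set z := ⁅x, y⁆ with hzdef
        have hz1 : z ≠ 1 := fun h => hxy (commutatorElement_eq_one_iff_commute.mp h).eq
        have hzc : z ∈ Subgroup.center G := hcc x y
        have horder : orderOf z = p := by
          have h1 : orderOf z ∣ p := orderOf_dvd_of_pow_eq_one (hep z)
          rcases (Nat.Prime.eq_one_or_self_of_dvd hp _ h1) with h | h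
          · exact absurd (orderOf_eq_one_iff.mp h) hz1
          · exact h
        set H := Subgroup.centralizer {x} ⊓ Subgroup.centralizer {y} with hHdef
        have hmemH : ∀ g : G, g ∈ H ↔ x * g = g * x ∧ y * g = g * y := by
          intro g
          rw [hHdef, Subgroup.mem_inf, Subgroup.mem_centralizer_iff,
            Subgroup.mem_centralizer_iff]
          simp
        have hxnotH : x ∉ H := fun h => hxy ((hmemH x).mp h).2.symm
        have hcardH : Nat.card H ≤ n := by
          have h1 : Nat.card H ∣ Nat.card G := Subgroup.card_subgroup_dvd_card H
          have h2 : Nat.card H ≠ Nat.card G := by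
            intro h
            exact hxnotH (Subgroup.eq_top_of_card_eq H h ▸ Subgroup.mem_top x)
          have h3 : 0 < Nat.card G := Nat.card_pos
          have h4 := Nat.le_of_dvd h3 h1
          omega
        have hepH : ∀ g : ↥H, g ^ p = 1 := by
          intro g; ext; push_cast; exact hep _
        have hccH : ∀ a b : ↥H, ⁅a, b⁆ ∈ Subgroup.center ↥H := by
          intro a b
          rw [Subgroup.mem_center_iff]
          intro h
          ext
          push_cast
          exact Subgroup.mem_center_iff.mp (hcc (a : G) (b : G)) h
        have hcycH : ∀ a b x' y' : ↥H, ⁅x', y'⁆ ≠ 1 →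
            ∃ k : ℕ, ⁅a, b⁆ = ⁅x', y'⁆ ^ k := by
          intro a b x' y' hne
          have hne' : ⁅(x' : G), (y' : G)⁆ ≠ 1 := by
            intro h
            apply hne
            ext; push_cast; exact h
          obtain ⟨k, hk⟩ := hcyc (a : G) (b : G) (x' : G) (y' : G) hne'
          exact ⟨k, by ext; push_cast; exact hk⟩
        obtain ⟨D⟩ := ih ↥H hcardH hepH hccH hcycH
        have hcomHx : ∀ a : ↥H, Commute (a : G) x := fun a => (((hmemH a).mp a.2).1).symm
        have hcomHy : ∀ a : ↥H, Commute (a : G) y := fun a => (((hmemH a).mp a.2).2).symm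
        refine ⟨⟨{g | ∃ a : ↥H, a ∈ D.SA ∧ ∃ i : ℤ, g = (a : G) * x ^ i},
          {g | ∃ b : ↥H, b ∈ D.SB ∧ ∃ j : ℤ, g = (b : G) * y ^ j},
          ?_, ?_, ?_, ?_, ?_, ?_, ?_, ?_, ?_, ?_⟩⟩
        · rintro g1 ⟨a1, ha1, i1, rfl⟩ g2 ⟨a2, ha2, i2, rfl⟩
          have c1 : Commute (a1 : G) (a2 : G) :=
            congrArg Subtype.val (D.commA a1 ha1 a2 ha2)
          exact ((c1.mul_right ((hcomHx a1).zpow_right i2)).mul_left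
            ((((hcomHx a2).symm.zpow_left i1)).mul_right
              (((Commute.refl x).zpow_left i1).zpow_right i2))).eq
        · rintro g1 ⟨b1, hb1, j1, rfl⟩ g2 ⟨b2, hb2, j2, rfl⟩
          have c1 : Commute (b1 : G) (b2 : G) :=
            congrArg Subtype.val (D.commB b1 hb1 b2 hb2)
          exact ((c1.mul_right ((hcomHy b1).zpow_right j2)).mul_left
            ((((hcomHy b2).symm.zpow_left j1)).mul_right
              (((Commute.refl y).zpow_left j1).zpow_right j2))).eq
        · rintro g ⟨a, ha, i, rfl⟩
          refine ⟨a⁻¹, D.invA a ha, -i, ?_⟩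
          push_cast
          rw [mul_inv_rev, zpow_neg]
          exact (((hcomHx a).zpow_right i).inv_inv).symm.eq
        · rintro g ⟨b, hb, j, rfl⟩
          refine ⟨b⁻¹, D.invB b hb, -j, ?_⟩
          push_cast
          rw [mul_inv_rev, zpow_neg]
          exact (((hcomHy b).zpow_right j).inv_inv).symm.eq
        · rintro g1 ⟨a1, ha1, i1, rfl⟩ g2 ⟨a2, ha2, i2, rfl⟩
          refine ⟨a1 * a2, D.mulA a1 ha1 a2 ha2, i1 + i2, ?_⟩
          calc (a1 : G) * x ^ i1 * ((a2 : G) * x ^ i2)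
              = (a1 : G) * (x ^ i1 * (a2 : G)) * x ^ i2 := by group
            _ = (a1 : G) * ((a2 : G) * x ^ i1) * x ^ i2 := by
                rw [((hcomHx a2).symm.zpow_left i1).eq]
            _ = ((a1 * a2 : ↥H) : G) * x ^ (i1 + i2) := by push_cast; rw [zpow_add]; group
        · rintro g1 ⟨b1, hb1, j1, rfl⟩ g2 ⟨b2, hb2, j2, rfl⟩
          refine ⟨b1 * b2, D.mulB b1 hb1 b2 hb2, j1 + j2, ?_⟩
          calc (b1 : G) * y ^ j1 * ((b2 : G) * y ^ j2)
              = (b1 : G) * (y ^ j1 * (b2 : G)) * y ^ j2 := by group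
            _ = (b1 : G) * ((b2 : G) * y ^ j1) * y ^ j2 := by
                rw [((hcomHy b2).symm.zpow_left j1).eq]
            _ = ((b1 * b2 : ↥H) : G) * y ^ (j1 + j2) := by push_cast; rw [zpow_add]; group
        · exact ⟨1, D.oneB, 0, by simp⟩
        · rintro g ⟨a, ha, i, rfl⟩ ⟨b, hb, j, hgb⟩
          have e1 : ⁅(a : G), y⁆ = 1 :=
            commutatorElement_eq_one_iff_commute.mpr (hcomHy a)
          have e2 : ⁅(b : G), y⁆ = 1 :=
            commutatorElement_eq_one_iff_commute.mpr (hcomHy b)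
          have e3 : ⁅(a : G), x⁆ = 1 :=
            commutatorElement_eq_one_iff_commute.mpr (hcomHx a)
          have e4 : ⁅(b : G), x⁆ = 1 :=
            commutatorElement_eq_one_iff_commute.mpr (hcomHx b)
          have c1 : ⁅(a : G) * x ^ i, y⁆ = z ^ i := by
            rw [ES_comm_mul_left hcc, e1, one_mul, ES_comm_zpow_left hcc, hzdef]
          have c2 : ⁅(a : G) * x ^ i, y⁆ = 1 := by
            rw [hgb, ES_comm_mul_left hcc, e2, one_mul, ES_comm_zpow_left hcc,
              commutatorElement_self, one_zpow]
          have hdvdi : (p : ℤ) ∣ i := by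
            rw [← horder]
            exact orderOf_dvd_iff_zpow_eq_one.mpr (c1.symm.trans c2)
          have hxi : x ^ i = 1 := by
            obtain ⟨m, rfl⟩ := hdvdi
            rw [zpow_mul, zpow_natCast, hep x, one_zpow]
          have c3 : ⁅(a : G) * x ^ i, x⁆ = 1 := by
            rw [ES_comm_mul_left hcc, e3, one_mul, ES_comm_zpow_left hcc,
              commutatorElement_self, one_zpow]
          have c4 : ⁅(a : G) * x ^ i, x⁆ = z ^ (-j) := by
            rw [hgb, ES_comm_mul_left hcc, e4, one_mul, ES_comm_zpow_left hcc,
              ← commutatorElement_inv, ← hzdef, inv_zpow, ← zpow_neg]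
          have hdvdj : (p : ℤ) ∣ -j := by
            rw [← horder]
            exact orderOf_dvd_iff_zpow_eq_one.mpr (c4.symm.trans c3)
          have hyj : y ^ j = 1 := by
            obtain ⟨m, hm⟩ := hdvdj
            have : j = (p : ℤ) * (-m) := by rw [mul_neg, ← hm, neg_neg]
            rw [this, zpow_mul, zpow_natCast, hep y, one_zpow]
          have hab : (a : G) = (b : G) := by
            have := hgb
            rw [hxi, hyj, mul_one, mul_one] at this
            exact this
          have : a = b := Subtype.ext hab
          subst this
          have ha1 : a = 1 := D.disj a ha hb
          rw [hxi, mul_one, ha1]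
          rfl
        · intro g
          obtain ⟨α, hα⟩ := hcyc g x x y hz1
          obtain ⟨γ, hγ⟩ := hcyc g y x y hz1
          set h := g * y ^ (α : ℤ) * x ^ (-(γ : ℤ)) with hh
          have hyx : ⁅y, x⁆ = z⁻¹ := by rw [← commutatorElement_inv, ← hzdef]
          have hhx : ⁅h, x⁆ = 1 := by
            rw [hh, ES_comm_mul_left hcc, ES_comm_mul_left hcc,
              ES_comm_zpow_left hcc, ES_comm_zpow_left hcc, commutatorElement_self,
              one_zpow, mul_one, hα, hyx, hzdef, inv_zpow, ← zpow_neg, ← zpow_natCast z α,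
              ← zpow_add, add_neg_cancel, zpow_zero]
          have hhy : ⁅h, y⁆ = 1 := by
            rw [hh, ES_comm_mul_left hcc, ES_comm_mul_left hcc,
              ES_comm_zpow_left hcc, ES_comm_zpow_left hcc, commutatorElement_self,
              one_zpow, mul_one, hγ, ← hzdef, zpow_neg, ← zpow_natCast z γ]
            group
          have hmem : h ∈ H := (hmemH h).mpr
            ⟨((commutatorElement_eq_one_iff_commute.mp hhx).symm).eq,
             ((commutatorElement_eq_one_iff_commute.mp hhy).symm).eq⟩
          obtain ⟨a, ha, b, hb, hab⟩ := D.dec ⟨h, hmem⟩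
          have hab' : h = (a : G) * (b : G) := congrArg Subtype.val hab
          refine ⟨(a : G) * x ^ (γ : ℤ), ⟨a, ha, (γ : ℤ), rfl⟩,
            (b : G) * y ^ (-(α : ℤ)), ⟨b, hb, -(α : ℤ), rfl⟩, ?_⟩
          calc g = h * x ^ (γ : ℤ) * y ^ (-(α : ℤ)) := by rw [hh]; group
            _ = (a : G) * ((b : G) * x ^ (γ : ℤ)) * y ^ (-(α : ℤ)) := by
                rw [hab']; group
            _ = (a : G) * (x ^ (γ : ℤ) * (b : G)) * y ^ (-(α : ℤ)) := by
                rw [((hcomHx b).zpow_right (γ : ℤ)).eq]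
            _ = ((a : G) * x ^ (γ : ℤ)) * ((b : G) * y ^ (-(α : ℤ))) := by group
        · intro w hw
          have hwH : w ∈ H := (hmemH w).mpr
            ⟨Subgroup.mem_center_iff.mp hw x, Subgroup.mem_center_iff.mp hw y⟩
          have hwc : (⟨w, hwH⟩ : ↥H) ∈ Subgroup.center ↥H := by
            rw [Subgroup.mem_center_iff]
            intro h
            ext
            push_cast
            exact Subgroup.mem_center_iff.mp hw (h : G)
          exact ⟨⟨w, hwH⟩, D.cenA _ hwc, 0, by simp⟩

section ESPsi
variable {G : Type*} [Group G] {p : ℕ}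

/-- chosen `A`-component -/
noncomputable def ESaF (D : ESdecompS G) (g : G) : G := (D.dec g).choose

noncomputable def ESbF (D : ESdecompS G) (g : G) : G :=
  (D.dec g).choose_spec.2.choose

lemma ESaF_mem (D : ESdecompS G) (g : G) : ESaF D g ∈ D.SA :=
  (D.dec g).choose_spec.1

lemma ESbF_mem (D : ESdecompS G) (g : G) : ESbF D g ∈ D.SB :=
  (D.dec g).choose_spec.2.choose_spec.1

lemma ESab_spec (D : ESdecompS G) (g : G) : g = ESaF D g * ESbF D g :=
  (D.dec g).choose_spec.2.choose_spec.2

lemma ESoneA (D : ESdecompS G) : (1 : G) ∈ D.SA :=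
  D.cenA 1 (one_mem _)

lemma ESD_unique (D : ESdecompS G) {a b a' b' : G} (ha : a ∈ D.SA) (hb : b ∈ D.SB)
    (ha' : a' ∈ D.SA) (hb' : b' ∈ D.SB) (heq : a * b = a' * b') : a = a' ∧ b = b' := by
  have h1 : a'⁻¹ * a = b' * b⁻¹ := by
    calc a'⁻¹ * a = a'⁻¹ * (a * b) * b⁻¹ := by group
      _ = a'⁻¹ * (a' * b') * b⁻¹ := by rw [heq]
      _ = b' * b⁻¹ := by group
  have h2 : a'⁻¹ * a ∈ D.SA := D.mulA _ (D.invA a' ha') _ ha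
  have h3 : a'⁻¹ * a ∈ D.SB := h1 ▸ D.mulB _ hb' _ (D.invB b hb)
  have h4 : a'⁻¹ * a = 1 := D.disj _ h2 h3
  have h5 : a = a' := by
    have := inv_mul_eq_one.mp h4; exact this.symm
  refine ⟨h5, ?_⟩
  subst h5
  exact mul_left_cancel heq

lemma ESD_eq (D : ESdecompS G) {a b g : G} (ha : a ∈ D.SA) (hb : b ∈ D.SB)
    (h : g = a * b) : ESaF D g = a ∧ ESbF D g = b :=
  ESD_unique D (ESaF_mem D g) (ESbF_mem D g) ha hb ((ESab_spec D g).symm.trans h)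

lemma ESD_powA (D : ESdecompS G) {a : G} (ha : a ∈ D.SA) (n : ℕ) : a ^ n ∈ D.SA := by
  induction n with
  | zero => simpa using ESoneA D
  | succ n ih => rw [pow_succ]; exact D.mulA _ ih _ ha

/-- the scaling map -/
noncomputable def ESpsi (D : ESdecompS G) (l : ℕ) (g : G) : G :=
  (ESaF D g) ^ l * ESbF D g

variable (hc : ∀ a b : G, ⁅a, b⁆ ∈ Subgroup.center G)
include hc

lemma ESpsi_mul (D : ESdecompS G) (l : ℕ) (g h : G) :
    ESpsi D l (g * h) = ESpsi D l g * ESpsi D l h := by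
  set c := ⁅ESbF D g, ESaF D h⁆ with hcc2
  have hcen : c ∈ Subgroup.center G := hc _ _
  have hdec : g * h = (ESaF D g * ESaF D h * c) * (ESbF D g * ESbF D h) := by
    calc g * h = ESaF D g * ESbF D g * (ESaF D h * ESbF D h) := by
          rw [← ESab_spec D g, ← ESab_spec D h]
      _ = ESaF D g * (ESbF D g * ESaF D h) * ESbF D h := by group
      _ = ESaF D g * (ESaF D h * ESbF D g * c) * ESbF D h := by
          rw [← ES_exch hc]
      _ = ESaF D g * ESaF D h * (ESbF D g * c) * ESbF D h := by group
      _ = ESaF D g * ESaF D h * (c * ESbF D g) * ESbF D h := by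
          rw [ES_central_comm hcen]
      _ = (ESaF D g * ESaF D h * c) * (ESbF D g * ESbF D h) := by group
  have hmemA : ESaF D g * ESaF D h * c ∈ D.SA :=
    D.mulA _ (D.mulA _ (ESaF_mem D g) _ (ESaF_mem D h)) _ (D.cenA c hcen)
  have hmemB : ESbF D g * ESbF D h ∈ D.SB :=
    D.mulB _ (ESbF_mem D g) _ (ESbF_mem D h)
  obtain ⟨haeq, hbeq⟩ := ESD_eq D hmemA hmemB hdec
  have hcg : Commute (ESaF D g) (ESaF D h) :=
    D.commA _ (ESaF_mem D g) _ (ESaF_mem D h)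
  have hcc3 : Commute (ESaF D g * ESaF D h) c :=
    ES_central_comm hcen _
  unfold ESpsi
  rw [haeq, hbeq, hcc3.mul_pow, hcg.mul_pow]
  have hcomm_pow : ⁅ESbF D g, (ESaF D h) ^ l⁆ = c ^ l := by
    rw [ES_comm_pow_right hc, hcc2]
  have hexch : ESbF D g * ESaF D h ^ l = ESaF D h ^ l * ESbF D g * c ^ l := by
    rw [ES_exch hc (ESbF D g) (ESaF D h ^ l), hcomm_pow]
  have hswap : ESbF D g * c ^ l = c ^ l * ESbF D g :=
    ES_central_comm (Subgroup.pow_mem _ hcen l) (ESbF D g)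
  symm
  calc ESaF D g ^ l * ESbF D g * (ESaF D h ^ l * ESbF D h)
      = ESaF D g ^ l * (ESbF D g * ESaF D h ^ l) * ESbF D h := by group
    _ = ESaF D g ^ l * (ESaF D h ^ l * ESbF D g * c ^ l) * ESbF D h := by rw [hexch]
    _ = ESaF D g ^ l * (ESaF D h ^ l * (ESbF D g * c ^ l)) * ESbF D h := by group
    _ = ESaF D g ^ l * (ESaF D h ^ l * (c ^ l * ESbF D g)) * ESbF D h := by rw [hswap]
    _ = ESaF D g ^ l * ESaF D h ^ l * c ^ l * (ESbF D g * ESbF D h) := by group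

lemma ESpsi_psi (D : ESdecompS G) (hep : ∀ g : G, g ^ p = 1) {l l' : ℕ}
    (hll' : (l * l') % p = 1) (g : G) : ESpsi D l' (ESpsi D l g) = g := by
  have hpow : ∀ a : G, (a ^ l) ^ l' = a := by
    intro a
    rw [← pow_mul, ES_pow_mod (hep a), hll', pow_one]
  obtain ⟨haeq, hbeq⟩ := ESD_eq D (ESD_powA D (ESaF_mem D g) l) (ESbF_mem D g)
    (rfl : ESpsi D l g = (ESaF D g) ^ l * ESbF D g)
  have expand : ESpsi D l' (ESpsi D l g)
      = (ESaF D (ESpsi D l g)) ^ l' * ESbF D (ESpsi D l g) := rfl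
  rw [expand, haeq, hbeq, hpow, ← ESab_spec D g]

/-- the scaling automorphism -/
noncomputable def ESpsiAut (D : ESdecompS G) (hep : ∀ g : G, g ^ p = 1) {l l' : ℕ}
    (hll' : (l * l') % p = 1) : G ≃* G where
  toFun := ESpsi D l
  invFun := ESpsi D l'
  left_inv g := ESpsi_psi hc D hep hll' g
  right_inv g := ESpsi_psi hc D hep (by rwa [Nat.mul_comm]) g
  map_mul' := ESpsi_mul hc D l

lemma ESpsiAut_central (D : ESdecompS G) (hep : ∀ g : G, g ^ p = 1) {l l' : ℕ}
    (hll' : (l * l') % p = 1) {w : G} (hw : w ∈ Subgroup.center G) :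
    ESpsiAut hc D hep hll' w = w ^ l := by
  have h : ESpsiAut hc D hep hll' w = ESpsi D l w := rfl
  obtain ⟨haeq, hbeq⟩ := ESD_eq D (D.cenA w hw) D.oneB (mul_one w).symm
  rw [h]
  unfold ESpsi
  rw [haeq, hbeq, mul_one]

end ESPsi

section ESMain

lemma ES_center_aut {G : Type*} [Group G] (φ : G ≃* G) {w : G}
    (hw : w ∈ Subgroup.center G) : φ w ∈ Subgroup.center G := by
  rw [Subgroup.mem_center_iff] at hw ⊢
  intro g
  have h1 : g = φ (φ.symm g) := (φ.apply_symm_apply g).symm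
  rw [h1, ← map_mul, ← map_mul, hw]

lemma ES_zpow_nat {G : Type*} [Group G] {g : G} {p : ℕ} (hp0 : 0 < p)
    (hg : g ^ p = 1) (i : ℤ) : ∃ n : ℕ, g ^ n = g ^ i := by
  have hpne : (p : ℤ) ≠ 0 := by exact_mod_cast hp0.ne'
  have h0 : (0 : ℤ) ≤ i % p := Int.emod_nonneg i hpne
  refine ⟨(i % p).toNat, ?_⟩
  calc g ^ (i % (p:ℤ)).toNat = g ^ (((i % p).toNat : ℤ)) := (zpow_natCast _ _).symm
    _ = g ^ (i % p) := by rw [Int.toNat_of_nonneg h0]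
    _ = g ^ (i % p + p * (i / p)) := by
        rw [zpow_add, zpow_mul, zpow_natCast, hg, one_zpow, mul_one]
    _ = g ^ i := by rw [Int.emod_add_mul_ediv]

theorem extraspecial_exp_p_orbit_count' {p : ℕ} (hp : p.Prime) (hodd : Odd p)
    (G : Type*) [Group G] [Finite G] (hG : IsPGroup p G ∧ Subgroup.center G = commutator G ∧
      Subgroup.center G = frattini G ∧ Nat.card (Subgroup.center G) = p)
    (hexp : Monoid.exponent G = p) :
    Nat.card (MulAction.orbitRel.Quotient (MulAut G) G) = 3 := by
  classical
  obtain ⟨hpg, hcomm_eq, hfrat, hcard⟩ := hG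
  haveI : Fact p.Prime := ⟨hp⟩
  have hp1 : 1 < p := hp.one_lt
  have hep : ∀ g : G, g ^ p = 1 := fun g => by
    rw [← hexp]; exact Monoid.pow_exponent_eq_one g
  have hcc : ∀ a b : G, ⁅a, b⁆ ∈ Subgroup.center G := by
    intro a b
    rw [hcomm_eq, commutator_def]
    exact Subgroup.commutator_mem_commutator (Subgroup.mem_top a) (Subgroup.mem_top b)
  haveI hcyc_center : IsCyclic ↥(Subgroup.center G) := isCyclic_of_prime_card hcard
  obtain ⟨ζ, hζ⟩ := hcyc_center.exists_generator
  set z₀ : G := (ζ : G) with hz₀def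
  have hz : z₀ ∈ Subgroup.center G := ζ.2
  have hoζ : orderOf ζ = p := by rw [orderOf_eq_card_of_forall_mem_zpowers hζ, hcard]
  have ho : orderOf z₀ = p := by
    rw [← hoζ]
    exact orderOf_injective (Subgroup.center G).subtype (Subgroup.subtype_injective _) ζ
  have hzg : ∀ w ∈ Subgroup.center G, ∃ k : ℕ, z₀ ^ k = w := by
    intro w hw
    obtain ⟨i, hi⟩ := Subgroup.mem_zpowers_iff.mp (hζ ⟨w, hw⟩)
    have hi' : z₀ ^ i = w := by
      have h' := congrArg Subtype.val hi
      simpa using h'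
    obtain ⟨n, hn⟩ := ES_zpow_nat hp.pos (hep z₀) i
    exact ⟨n, hn.trans hi'⟩
  have h2 : (2 : ZMod p) ≠ 0 := by
    intro h
    have hdvd : p ∣ 2 := by
      have := (ZMod.natCast_eq_zero_iff 2 p).mp (by exact_mod_cast h)
      exact this
    have hp2 : p = 2 := (Nat.prime_dvd_prime_iff_eq hp Nat.prime_two).mp hdvd
    rw [hp2] at hodd
    exact (Nat.not_odd_iff_even.mpr (by norm_num)) hodd
  have hz₀ne1 : z₀ ≠ 1 := by
    intro h; rw [h, orderOf_one] at ho; omega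
  have hnonab : ∃ x₀ : G, x₀ ∉ Subgroup.center G := by
    by_contra hcon
    push_neg at hcon
    have hb : ∀ a b : G, ⁅a, b⁆ = 1 := fun a b =>
      commutatorElement_eq_one_iff_commute.mpr (Subgroup.mem_center_iff.mp (hcon b) a)
    have hbot : commutator G = ⊥ := by
      rw [commutator_def]
      apply le_bot_iff.mp
      rw [Subgroup.commutator_le]
      intro g1 _ g2 _
      rw [hb]
      exact Subgroup.one_mem ⊥
    rw [hcomm_eq, hbot, Subgroup.card_bot] at hcard
    omega
  obtain ⟨x₀, hx₀⟩ := hnonab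
  have hcyc : ∀ a b x y : G, ⁅x, y⁆ ≠ 1 → ∃ k : ℕ, ⁅a, b⁆ = ⁅x, y⁆ ^ k := by
    intro a b x y hne
    set m := ESf p z₀ x y with hm
    have hm0 : m ≠ 0 := fun h0 => hne ((ESf_eq_zero_iff hp1 hcc ho hzg x y).mp h0)
    refine ⟨(m⁻¹ * ESf p z₀ a b).val, ?_⟩
    rw [← ESf_spec hp1 hcc ho hzg x y, ← ESf_spec hp1 hcc ho hzg a b, ← hm,
      ESe_pow hp1 ho, ← mul_assoc, mul_inv_cancel₀ hm0, one_mul]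
  obtain ⟨D⟩ := ES_ab p hp (Nat.card G) G le_rfl hep hcc hcyc
  have T1 : ∀ z' ∈ Subgroup.center G, z' ≠ 1 → ∃ φ : G ≃* G, φ z₀ = z' := by
    intro z' hz' hz'1
    obtain ⟨k, hk⟩ := hzg z' hz'
    have hkp : ¬ p ∣ k := by
      intro hdvd
      apply hz'1
      have hmod : k % p = 0 := Nat.mod_eq_zero_of_dvd hdvd
      rw [← hk, ES_pow_mod (hep z₀), hmod, pow_zero]
    have hcop : Nat.Coprime k p := Nat.coprime_comm.mp (hp.coprime_iff_not_dvd.mpr hkp)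
    obtain ⟨l', -, hl'⟩ := Nat.exists_mul_mod_eq_one_of_coprime hcop hp1
    refine ⟨ESpsiAut hcc D hep hl', ?_⟩
    rw [ESpsiAut_central hcc D hep hl' hz, hk]
  have T2 : ∀ x y : G, x ∉ Subgroup.center G → y ∉ Subgroup.center G →
      ∃ φ : G ≃* G, φ x = y := fun x y hx hy =>
    ES_trans_noncentral hp h2 hcc hep hz ho hzg hx hy
  -- the three orbit classes
  let e : Fin 3 → MulAction.orbitRel.Quotient (MulAut G) G :=
    ![Quotient.mk'' 1, Quotient.mk'' z₀, Quotient.mk'' x₀]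
  have key : ∀ a b : G, (∃ φ : G ≃* G, φ b = a) →
      (Quotient.mk'' a : MulAction.orbitRel.Quotient (MulAut G) G) = Quotient.mk'' b := by
    intro a b ⟨φ, hφ⟩
    apply Quotient.sound'
    rw [MulAction.orbitRel_apply, MulAction.mem_orbit_iff]
    exact ⟨φ, hφ⟩
  have key2 : ∀ a b : G,
      (Quotient.mk'' a : MulAction.orbitRel.Quotient (MulAut G) G) = Quotient.mk'' b →
      ∃ φ : G ≃* G, φ b = a := by
    intro a b h
    have h' := Quotient.eq''.mp h
    rw [MulAction.orbitRel_apply, MulAction.mem_orbit_iff] at h'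
    obtain ⟨φ, hφ⟩ := h'
    exact ⟨φ, hφ⟩
  have hsur : Function.Surjective e := by
    intro q
    induction q using Quotient.inductionOn' with
    | h g =>
      by_cases hg : g ∈ Subgroup.center G
      · by_cases hg1 : g = 1
        · exact ⟨0, by simp only [e, Matrix.cons_val_zero, hg1]⟩
        · refine ⟨1, ?_⟩
          show Quotient.mk'' z₀ = Quotient.mk'' g
          exact (key g z₀ (T1 g hg hg1)).symm
      · refine ⟨2, ?_⟩
        show Quotient.mk'' x₀ = Quotient.mk'' g
        exact (key g x₀ (T2 x₀ g hx₀ hg)).symm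
  have h01 : (Quotient.mk'' (1 : G) : MulAction.orbitRel.Quotient (MulAut G) G)
      ≠ Quotient.mk'' z₀ := by
    intro h
    obtain ⟨φ, hφ⟩ := key2 _ _ h
    exact hz₀ne1 (φ.injective (hφ.trans (map_one φ).symm))
  have h02 : (Quotient.mk'' (1 : G) : MulAction.orbitRel.Quotient (MulAut G) G)
      ≠ Quotient.mk'' x₀ := by
    intro h
    obtain ⟨φ, hφ⟩ := key2 _ _ h
    have : x₀ = 1 := φ.injective (hφ.trans (map_one φ).symm)
    exact hx₀ (this ▸ Subgroup.one_mem _)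
  have h12 : (Quotient.mk'' z₀ : MulAction.orbitRel.Quotient (MulAut G) G)
      ≠ Quotient.mk'' x₀ := by
    intro h
    obtain ⟨φ, hφ⟩ := key2 _ _ h
    have hx' : x₀ = φ.symm z₀ := by rw [← hφ, φ.symm_apply_apply]
    exact hx₀ (hx' ▸ ES_center_aut φ.symm hz)
  have hinj : Function.Injective e := by
    intro i j hij
    fin_cases i <;> fin_cases j <;>
      simp only [e, Matrix.cons_val_zero, Matrix.cons_val_one, Matrix.head_cons,
        Fin.mk_zero, Fin.mk_one, Matrix.cons_val_two, Matrix.tail_cons] at hij ⊢ <;>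
      first
        | rfl
        | exact absurd hij h01 | exact absurd hij h02 | exact absurd hij h12
        | exact absurd hij.symm h01 | exact absurd hij.symm h02 | exact absurd hij.symm h12
  exact Nat.card_eq_of_equiv_fin (Equiv.ofBijective e ⟨hinj, hsur⟩).symm

end ESMain


/-- The natural action of Aut(G) on an extraspecial p-group of exponent p (p odd)
has exactly three orbits. -/
theorem extraspecial_exp_p_orbit_count {p : ℕ} (hp : p.Prime) (hodd : Odd p)
    (G : Type*) [Group G] [Finite G] (hG : IsExtraspecial p G)
    (hexp : Monoid.exponent G = p) :
    Nat.card (MulAction.orbitRel.Quotient (MulAut G) G) = 3 :=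
  extraspecial_exp_p_orbit_count' hp hodd G hG hexp
end
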